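/- arXiv:2509.10342 — 4 statements merged into one kernel-verified Lean document; each statement's English description precedes it below -/
import Mathlib

section
/- Let d ≥ 1, β > −1/2, γ > −1, n ∈ ℕ and 1 ≤ p < ∞. Let f be a measurable function on Λ^{d+1}_{a,b,c} with ∫_{Λ^{d+1}_{a,b,c}} |f|^p W^{β,γ}_{a,b,c} dx dt < ∞. Then inf_{g} (∫_{Λ^{d+1}_{a,b,c}} |f−g|^p W^{β,γ}_{a,b,c} dx dt)^{1/p} = (b−a)^{1/p} · inf_{G} (∫_{B^{d+1}₊} |f∘ψ⁻¹ − G|^p |v|^{2β}(1−‖y‖²−v²)^{γ} dy dv)^{1/p}, where both infima are taken over polynomials in d+1 variables of degree at most n that are even in the last variable. -/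
open MeasureTheory MvPolynomial Pointwise

noncomputable section

/-- Euclidean space `ℝ^d`. -/
abbrev Euc (d : ℕ) := EuclideanSpace ℝ (Fin d)

/-- The domain `Λ^{d+1}_{a,b,c}`. -/
def LamD (d : ℕ) (a b c : ℝ) : Set (Euc d × ℝ) :=
  {p | 0 ≤ p.2 ∧ ‖p.1‖ ≤ 1 ∧ a + (c - a) * ‖p.1‖ ^ 2 ≤ p.2 ^ 2 ∧
       p.2 ^ 2 ≤ b + (c - b) * ‖p.1‖ ^ 2}

/-- The closed upper half-ball `B^{d+1}₊`. -/
def ballPlus (d : ℕ) : Set (Euc d × ℝ) := {p | ‖p.1‖ ^ 2 + p.2 ^ 2 ≤ 1 ∧ 0 ≤ p.2}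

/-- The inverse map `ψ⁻¹(y,v) = (y, sqrt((b−a)v² + a(1−‖y‖²) + c‖y‖²))`. -/
def psiDInv (d : ℕ) (a b c : ℝ) (p : Euc d × ℝ) : Euc d × ℝ :=
  (p.1, Real.sqrt ((b - a) * p.2 ^ 2 + a * (1 - ‖p.1‖ ^ 2) + c * ‖p.1‖ ^ 2))

/-- The weight `W^{β,γ}_{a,b,c}` on `Λ^{d+1}_{a,b,c}`. -/
def WD (d : ℕ) (a b c β γ : ℝ) (p : Euc d × ℝ) : ℝ :=
  p.2 * ((-a + (a - c) * ‖p.1‖ ^ 2 + p.2 ^ 2) / (b - a)) ^ (β - 1 / 2) *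
    ((b - (b - c) * ‖p.1‖ ^ 2 - p.2 ^ 2) / (b - a)) ^ γ

/-- Evaluation of a polynomial in `d+1` variables at a point of `ℝ^d × ℝ`. -/
def evP (d : ℕ) (R : MvPolynomial (Fin (d + 1)) ℝ) (p : Euc d × ℝ) : ℝ :=
  MvPolynomial.eval (Fin.snoc (fun i => p.1 i) p.2) R

/-- A polynomial in `d+1` variables is even in the last variable. -/
def EvenLast (d : ℕ) (R : MvPolynomial (Fin (d + 1)) ℝ) : Prop :=
  ∀ (x : Euc d) (t : ℝ), evP d R (x, -t) = evP d R (x, t)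



lemma evalSnoc (d : ℕ) (P : MvPolynomial (Fin (d+1)) ℝ) (z : Fin d → ℝ) (t : ℝ) :
    eval (Fin.snoc z t) P
      = ∑ m ∈ P.support, P.coeff m *
          ((∏ j : Fin d, z j ^ m j.castSucc) * t ^ m (Fin.last d)) := by
  rw [eval_eq']
  refine Finset.sum_congr rfl fun m _ => ?_
  rw [Fin.prod_univ_castSucc]
  simp [mul_assoc]

lemma evenLast_eval {d : ℕ} {P : MvPolynomial (Fin (d+1)) ℝ} (h : EvenLast d P)
    (z : Fin d → ℝ) (t : ℝ) :
    eval (Fin.snoc z (-t)) P = eval (Fin.snoc z t) P :=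
  h (WithLp.toLp 2 z) t

lemma evenLast_of_eval {d : ℕ} {P : MvPolynomial (Fin (d+1)) ℝ}
    (h : ∀ (z : Fin d → ℝ) (t : ℝ), eval (Fin.snoc z (-t)) P = eval (Fin.snoc z t) P) :
    EvenLast d P :=
  fun x t => h (fun i => x i) t

lemma snoc_eta {d : ℕ} (y : Fin (d+1) → ℝ) :
    Fin.snoc (fun j : Fin d => y j.castSucc) (y (Fin.last d)) = y := by
  funext i
  cases i using Fin.lastCases with
  | last => simp
  | cast j => simp

lemma even_last_exponent {d : ℕ} {P : MvPolynomial (Fin (d+1)) ℝ} (h : EvenLast d P) :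
    ∀ m ∈ P.support, Even (m (Fin.last d)) := by
  set Pf : MvPolynomial (Fin (d+1)) ℝ :=
    ∑ m ∈ P.support, monomial m ((-1) ^ (m (Fin.last d)) * P.coeff m) with hPf
  have hevPf : ∀ (z : Fin d → ℝ) (t : ℝ),
      eval (Fin.snoc z t) Pf = eval (Fin.snoc z (-t)) P := by
    intro z t
    rw [hPf, map_sum, evalSnoc]
    refine Finset.sum_congr rfl fun m _ => ?_
    rw [eval_monomial, Finsupp.prod_fintype _ _ (fun i => pow_zero _),
      Fin.prod_univ_castSucc]
    simp only [Fin.snoc_castSucc, Fin.snoc_last]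
    rw [neg_pow]
    ring
  have hflip : Pf = P := by
    apply MvPolynomial.funext
    intro y
    have hy := snoc_eta y
    calc eval y Pf = eval (Fin.snoc (fun j : Fin d => y j.castSucc) (y (Fin.last d))) Pf := by
          rw [hy]
      _ = eval (Fin.snoc (fun j : Fin d => y j.castSucc) (-(y (Fin.last d)))) P := by
          rw [hevPf]
      _ = eval (Fin.snoc (fun j : Fin d => y j.castSucc) (y (Fin.last d))) P :=
          evenLast_eval h _ _
      _ = eval y P := by rw [hy]
  have hco : ∀ m, Pf.coeff m = (-1) ^ (m (Fin.last d)) * P.coeff m := by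
    intro m
    rw [hPf, coeff_sum]
    simp only [coeff_monomial]
    by_cases hm : m ∈ P.support
    · rw [Finset.sum_eq_single m]
      · simp
      · intro b _ hb; simp [hb]
      · intro hnot; exact absurd hm hnot
    · have : P.coeff m = 0 := by rwa [MvPolynomial.notMem_support_iff] at hm
      rw [this, mul_zero]
      apply Finset.sum_eq_zero
      intro b hb
      have : b ≠ m := fun hbm => hm (hbm ▸ hb)
      simp [this]
  intro m hm
  have hc : P.coeff m ≠ 0 := by rwa [MvPolynomial.mem_support_iff] at hm
  have : (-1 : ℝ) ^ (m (Fin.last d)) * P.coeff m = P.coeff m := by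
    rw [← hco, hflip]
  by_contra hodd
  rw [Nat.not_even_iff_odd] at hodd
  rw [hodd.neg_one_pow, neg_one_mul] at this
  exact hc (by linarith)

lemma transfer {d n : ℕ} (P G : MvPolynomial (Fin (d+1)) ℝ)
    (hP : EvenLast d P) (hG : EvenLast d G) (hGdeg : G.totalDegree ≤ 2)
    (hPdeg : P.totalDegree ≤ n) :
    ∃ P' : MvPolynomial (Fin (d+1)) ℝ, P'.totalDegree ≤ n ∧ EvenLast d P' ∧
      ∀ (z : Fin d → ℝ) (t : ℝ), 0 ≤ eval (Fin.snoc z t) G →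
        eval (Fin.snoc z t) P'
          = eval (Fin.snoc z (Real.sqrt (eval (Fin.snoc z t) G))) P := by
  set P' : MvPolynomial (Fin (d+1)) ℝ :=
    ∑ m ∈ P.support, C (P.coeff m) *
      ((∏ j : Fin d, X (j.castSucc) ^ m j.castSucc) * G ^ (m (Fin.last d) / 2)) with hP'
  have hev : ∀ y : Fin (d+1) → ℝ, eval y P'
      = ∑ m ∈ P.support, P.coeff m *
          ((∏ j : Fin d, y j.castSucc ^ m j.castSucc) * (eval y G) ^ (m (Fin.last d) / 2)) := by
    intro y
    rw [hP', map_sum]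
    refine Finset.sum_congr rfl fun m _ => ?_
    simp [eval_X, map_pow, map_prod]
  refine ⟨P', ?_, ?_, ?_⟩
  · rw [hP']
    refine le_trans (totalDegree_finset_sum _ _) (Finset.sup_le fun m hm => ?_)
    have h1 : (C (P.coeff m) *
        ((∏ j : Fin d, X (j.castSucc) ^ m j.castSucc) * G ^ (m (Fin.last d) / 2))).totalDegree
        ≤ (∑ j : Fin d, m j.castSucc) + (m (Fin.last d) / 2) * 2 := by
      refine le_trans (totalDegree_mul _ _) ?_
      rw [totalDegree_C, zero_add]
      refine le_trans (totalDegree_mul _ _) (add_le_add ?_ ?_)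
      · refine le_trans (totalDegree_finset_prod _ _) ?_
        refine Finset.sum_le_sum fun j _ => ?_
        refine le_trans (totalDegree_pow _ _) ?_
        rw [totalDegree_X]
        simp
      · refine le_trans (totalDegree_pow _ _) ?_
        exact Nat.mul_le_mul_left _ hGdeg
    refine le_trans h1 (le_trans ?_ (le_trans (le_totalDegree hm) hPdeg))
    have hsum : (m.sum fun _ e => e) = ∑ i : Fin (d+1), m i := by
      rw [Finsupp.sum_fintype]
      intro i; rfl
    rw [hsum, Fin.sum_univ_castSucc]
    exact add_le_add le_rfl (Nat.div_mul_le_self _ _)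
  · refine evenLast_of_eval fun z t => ?_
    rw [hev, hev]
    refine Finset.sum_congr rfl fun m _ => ?_
    rw [evenLast_eval hG]
    simp
  · intro z t hge
    set g := eval (Fin.snoc z t) G with hg
    rw [hev, evalSnoc d P z (Real.sqrt g)]
    simp only [Fin.snoc_castSucc]
    refine Finset.sum_congr rfl fun m hm => ?_
    have heven := even_last_exponent hP m hm
    have h2 : m (Fin.last d) / 2 * 2 = m (Fin.last d) := Nat.div_two_mul_two_of_even heven
    have hs : Real.sqrt g ^ (m (Fin.last d)) = g ^ (m (Fin.last d) / 2) := by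
      conv_lhs => rw [← h2]
      rw [pow_mul', Real.sq_sqrt hge]
    rw [hs]

lemma norm_sq_euc {d : ℕ} (x : Euc d) : ‖x‖ ^ 2 = ∑ j : Fin d, x j ^ 2 := by
  rw [EuclideanSpace.norm_eq, Real.sq_sqrt (by positivity)]
  simp [sq_abs]

def sumSq (d : ℕ) : MvPolynomial (Fin (d+1)) ℝ := ∑ j : Fin d, X j.castSucc ^ 2

lemma eval_sumSq (d : ℕ) (z : Fin d → ℝ) (t : ℝ) :
    eval (Fin.snoc z t) (sumSq d) = ∑ j : Fin d, z j ^ 2 := by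
  simp [sumSq]

lemma deg_sumSq (d : ℕ) : (sumSq d).totalDegree ≤ 2 := by
  refine le_trans (totalDegree_finset_sum _ _) (Finset.sup_le fun j _ => ?_)
  refine le_trans (totalDegree_pow _ _) ?_
  rw [totalDegree_X]

def GB (d : ℕ) (a b c : ℝ) : MvPolynomial (Fin (d+1)) ℝ :=
  C a + C (c-a) * sumSq d + C (b-a) * X (Fin.last d) ^ 2

lemma eval_GB (d : ℕ) (a b c : ℝ) (z : Fin d → ℝ) (t : ℝ) :
    eval (Fin.snoc z t) (GB d a b c)
      = a + (c-a) * (∑ j : Fin d, z j ^ 2) + (b-a) * t ^ 2 := by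
  simp [GB, eval_sumSq]

lemma deg_GB (d : ℕ) (a b c : ℝ) : (GB d a b c).totalDegree ≤ 2 := by
  refine le_trans (totalDegree_add _ _) (max_le (le_trans (totalDegree_add _ _) (max_le ?_ ?_)) ?_)
  · simp [totalDegree_C]
  · refine le_trans (totalDegree_mul _ _) ?_
    rw [totalDegree_C, zero_add]
    exact deg_sumSq d
  · refine le_trans (totalDegree_mul _ _) ?_
    rw [totalDegree_C, zero_add]
    refine le_trans (totalDegree_pow _ _) ?_
    rw [totalDegree_X]

lemma even_GB (d : ℕ) (a b c : ℝ) : EvenLast d (GB d a b c) := by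
  refine evenLast_of_eval fun z t => ?_
  rw [eval_GB, eval_GB, neg_pow]
  ring

def GLam (d : ℕ) (a b c : ℝ) : MvPolynomial (Fin (d+1)) ℝ :=
  C ((b-a)⁻¹) * (C (-a) + C (a-c) * sumSq d + X (Fin.last d) ^ 2)

lemma eval_GLam (d : ℕ) (a b c : ℝ) (z : Fin d → ℝ) (t : ℝ) :
    eval (Fin.snoc z t) (GLam d a b c)
      = (b-a)⁻¹ * (-a + (a-c) * (∑ j : Fin d, z j ^ 2) + t ^ 2) := by
  simp [GLam, eval_sumSq]

lemma deg_GLam (d : ℕ) (a b c : ℝ) : (GLam d a b c).totalDegree ≤ 2 := by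
  refine le_trans (totalDegree_mul _ _) ?_
  rw [totalDegree_C, zero_add]
  refine le_trans (totalDegree_add _ _) (max_le (le_trans (totalDegree_add _ _) (max_le ?_ ?_)) ?_)
  · simp [totalDegree_C]
  · refine le_trans (totalDegree_mul _ _) ?_
    rw [totalDegree_C, zero_add]
    exact deg_sumSq d
  · refine le_trans (totalDegree_pow _ _) ?_
    rw [totalDegree_X]

lemma even_GLam (d : ℕ) (a b c : ℝ) : EvenLast d (GLam d a b c) := by
  refine evenLast_of_eval fun z t => ?_
  rw [eval_GLam, eval_GLam, neg_pow]
  ring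

lemma forward_pair (d : ℕ) (a b c : ℝ) (ha : 0 ≤ a) (hab : a < b) (hc : 0 ≤ c) {n : ℕ}
    (P : MvPolynomial (Fin (d+1)) ℝ) (hdeg : P.totalDegree ≤ n) (hev : EvenLast d P) :
    ∃ P' : MvPolynomial (Fin (d+1)) ℝ, P'.totalDegree ≤ n ∧ EvenLast d P' ∧
      ∀ w ∈ ballPlus d, evP d P (psiDInv d a b c w) = evP d P' w := by
  obtain ⟨P', h1, h2, h3⟩ := transfer P (GB d a b c) hev (even_GB d a b c) (deg_GB d a b c) hdeg
  refine ⟨P', h1, h2, fun w hw => ?_⟩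
  set z : Fin d → ℝ := fun i => w.1 i with hz
  have hnz : ∑ j : Fin d, z j ^ 2 = ‖w.1‖ ^ 2 := (norm_sq_euc w.1).symm
  have hg : eval (Fin.snoc z w.2) (GB d a b c)
      = (b - a) * w.2 ^ 2 + a * (1 - ‖w.1‖ ^ 2) + c * ‖w.1‖ ^ 2 := by
    rw [eval_GB, hnz]; ring
  have hr1 : ‖w.1‖ ^ 2 ≤ 1 := by nlinarith [hw.1, sq_nonneg w.2]
  have hge : 0 ≤ eval (Fin.snoc z w.2) (GB d a b c) := by
    rw [hg]
    nlinarith [sq_nonneg w.2, norm_nonneg w.1]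
  have := h3 z w.2 hge
  rw [hg] at this
  exact this.symm

lemma backward_pair (d : ℕ) (a b c : ℝ) (ha : 0 ≤ a) (hab : a < b) (hc : 0 ≤ c) {n : ℕ}
    (P' : MvPolynomial (Fin (d+1)) ℝ) (hdeg : P'.totalDegree ≤ n) (hev : EvenLast d P') :
    ∃ P : MvPolynomial (Fin (d+1)) ℝ, P.totalDegree ≤ n ∧ EvenLast d P ∧
      ∀ w ∈ ballPlus d, evP d P (psiDInv d a b c w) = evP d P' w := by
  obtain ⟨P, h1, h2, h3⟩ := transfer P' (GLam d a b c) hev (even_GLam d a b c) (deg_GLam d a b c) hdeg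
  refine ⟨P, h1, h2, fun w hw => ?_⟩
  set z : Fin d → ℝ := fun i => w.1 i with hz
  have hnz : ∑ j : Fin d, z j ^ 2 = ‖w.1‖ ^ 2 := (norm_sq_euc w.1).symm
  set S : ℝ := (b - a) * w.2 ^ 2 + a * (1 - ‖w.1‖ ^ 2) + c * ‖w.1‖ ^ 2 with hS
  have hr1 : ‖w.1‖ ^ 2 ≤ 1 := by
    have := hw.1
    nlinarith [sq_nonneg w.2]
  have hS0 : 0 ≤ S := by
    rw [hS]
    nlinarith [sq_nonneg w.2, norm_nonneg w.1, hab]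
  have ht2 : Real.sqrt S ^ 2 = S := Real.sq_sqrt hS0
  have hg : eval (Fin.snoc z (Real.sqrt S)) (GLam d a b c) = w.2 ^ 2 := by
    rw [eval_GLam, hnz, ht2]
    have hba : b - a ≠ 0 := by linarith
    have h5 : -a + (a - c) * ‖w.1‖ ^ 2 + S = (b - a) * w.2 ^ 2 := by rw [hS]; ring
    rw [h5, inv_mul_cancel_left₀ hba]
  have := h3 z (Real.sqrt S) (by rw [hg]; positivity)
  rw [hg, Real.sqrt_sq hw.2] at this
  exact this


instance prodHaar (d : ℕ) :
    MeasureTheory.Measure.IsAddHaarMeasure (volume : Measure (Euc d × ℝ)) :=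
  (Measure.volume_eq_prod (Euc d) ℝ) ▸
    MeasureTheory.Measure.prod.instIsAddHaarMeasure (volume : Measure (Euc d)) (volume : Measure ℝ)

lemma det_aux {d : ℕ} (T : (Euc d × ℝ) →L[ℝ] (Euc d × ℝ)) (ℓ : Euc d →L[ℝ] ℝ) (k : ℝ)
    (hT : ∀ (u : Euc d) (w : ℝ), T (u, w) = (u, ℓ u + k * w)) : T.det = k := by
  classical
  let bE : Module.Basis (Fin d) ℝ (Euc d) := PiLp.basisFun 2 ℝ (Fin d)
  let bR : Module.Basis Unit ℝ ℝ := Module.Basis.singleton Unit ℝ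
  let B : Module.Basis (Fin d ⊕ Unit) ℝ (Euc d × ℝ) := bE.prod bR
  have hdet : T.det = LinearMap.det (T : (Euc d × ℝ) →ₗ[ℝ] (Euc d × ℝ)) := rfl
  rw [hdet, ← LinearMap.det_toMatrix B]
  have hB : ∀ j : Fin d ⊕ Unit, (B j : Euc d × ℝ)
      = Sum.elim (fun i => ((bE i : Euc d), (0:ℝ))) (fun _ => ((0 : Euc d), (1:ℝ))) j := by
    intro j
    cases j with
    | inl i =>
      exact Prod.ext (Module.Basis.prod_apply_inl_fst bE bR i) (Module.Basis.prod_apply_inl_snd bE bR i)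
    | inr u =>
      exact Prod.ext (Module.Basis.prod_apply_inr_fst bE bR u)
        ((Module.Basis.prod_apply_inr_snd bE bR u).trans (Module.Basis.singleton_apply Unit ℝ u))
  have hM : LinearMap.toMatrix B B (T : (Euc d × ℝ) →ₗ[ℝ] (Euc d × ℝ))
      = Matrix.fromBlocks 1 0 (Matrix.of fun _ j => ℓ (bE j)) (Matrix.of fun _ _ => k) := by
    have hT' : ∀ (u : Euc d) (w : ℝ),
        (T : (Euc d × ℝ) →ₗ[ℝ] (Euc d × ℝ)) (u, w) = (u, ℓ u + k * w) := hT
    ext i j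
    rw [LinearMap.toMatrix_apply, hB]
    cases i with
    | inl i =>
      cases j with
      | inl j =>
        rw [Sum.elim_inl, hT', Module.Basis.prod_repr_inl, Matrix.fromBlocks_apply₁₁]
        simp [Module.Basis.repr_self, Finsupp.single_apply, Matrix.one_apply, eq_comm]
      | inr u =>
        rw [Sum.elim_inr, hT', Module.Basis.prod_repr_inl, Matrix.fromBlocks_apply₁₂]
        simp
    | inr u =>
      cases j with
      | inl j =>
        rw [Sum.elim_inl, hT', Module.Basis.prod_repr_inr, Matrix.fromBlocks_apply₂₁]
        simp [bR, Module.Basis.singleton_repr]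
      | inr u' =>
        rw [Sum.elim_inr, hT', Module.Basis.prod_repr_inr, Matrix.fromBlocks_apply₂₂]
        simp [bR, Module.Basis.singleton_repr]
  rw [hM, Matrix.det_fromBlocks_zero₁₂, Matrix.det_one, one_mul, Matrix.det_unique]
  rfl

/-- the set on which the change of variables is smooth -/
def sReg (d : ℕ) : Set (Euc d × ℝ) := {p | ‖p.1‖ ^ 2 + p.2 ^ 2 ≤ 1 ∧ 0 < p.2}

lemma measurableSet_sReg (d : ℕ) : MeasurableSet (sReg d) := by
  have h1 : IsClosed {p : Euc d × ℝ | ‖p.1‖ ^ 2 + p.2 ^ 2 ≤ 1} :=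
    isClosed_le (by fun_prop) continuous_const
  have h2 : IsOpen {p : Euc d × ℝ | 0 < p.2} := isOpen_lt continuous_const continuous_snd
  exact (h1.measurableSet).inter h2.measurableSet

lemma measurableSet_LamD (d : ℕ) (a b c : ℝ) : MeasurableSet (LamD d a b c) := by
  have h1 : IsClosed {p : Euc d × ℝ | 0 ≤ p.2} := isClosed_le continuous_const continuous_snd
  have h2 : IsClosed {p : Euc d × ℝ | ‖p.1‖ ≤ 1} :=
    isClosed_le (continuous_fst.norm) continuous_const
  have h3 : IsClosed {p : Euc d × ℝ | a + (c - a) * ‖p.1‖ ^ 2 ≤ p.2 ^ 2} :=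
    isClosed_le (by fun_prop) (by fun_prop)
  have h4 : IsClosed {p : Euc d × ℝ | p.2 ^ 2 ≤ b + (c - b) * ‖p.1‖ ^ 2} :=
    isClosed_le (by fun_prop) (by fun_prop)
  exact ((h1.inter (h2.inter (h3.inter h4))).measurableSet)

lemma measurableSet_ballPlus (d : ℕ) : MeasurableSet (ballPlus d) := by
  have h1 : IsClosed {p : Euc d × ℝ | ‖p.1‖ ^ 2 + p.2 ^ 2 ≤ 1} :=
    isClosed_le (by fun_prop) continuous_const
  have h2 : IsClosed {p : Euc d × ℝ | 0 ≤ p.2} := isClosed_le continuous_const continuous_snd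
  exact (h1.inter h2).measurableSet

lemma null_graph (d : ℕ) (a c : ℝ) :
    volume {p : Euc d × ℝ | p.2 ^ 2 = a + (c - a) * ‖p.1‖ ^ 2} = 0 := by
  set N := {p : Euc d × ℝ | p.2 ^ 2 = a + (c - a) * ‖p.1‖ ^ 2} with hN
  have hNm : MeasurableSet N :=
    (isClosed_eq (by fun_prop) (by fun_prop)).measurableSet
  rw [Measure.volume_eq_prod _ _, Measure.prod_apply hNm]
  have hz : ∀ x : Euc d, (volume (Prod.mk x ⁻¹' N) : ENNReal) = 0 := by
    intro x
    refine measure_mono_null (t := {Real.sqrt (a + (c - a) * ‖x‖ ^ 2),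
      -Real.sqrt (a + (c - a) * ‖x‖ ^ 2)}) ?_ ((Set.toFinite _).measure_zero volume)
    intro t ht
    have ht' : t ^ 2 = a + (c - a) * ‖x‖ ^ 2 := ht
    have habs : Real.sqrt (a + (c - a) * ‖x‖ ^ 2) = |t| := by
      rw [← ht', Real.sqrt_sq_eq_abs]
    rcases abs_cases t with ⟨h, _⟩ | ⟨h, _⟩
    · left; rw [habs, h]
    · right
      rw [Set.mem_singleton_iff, habs, h, neg_neg]
  calc ∫⁻ x, volume (Prod.mk x ⁻¹' N) = ∫⁻ (_ : Euc d), (0 : ENNReal) :=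
        MeasureTheory.lintegral_congr fun x => hz x
    _ = 0 := MeasureTheory.lintegral_zero

lemma null_v0 (d : ℕ) : volume {p : Euc d × ℝ | p.2 = 0} = 0 := by
  have : {p : Euc d × ℝ | p.2 = 0} = (Set.univ : Set (Euc d)) ×ˢ ({0} : Set ℝ) := by
    ext ⟨y, v⟩; simp [Set.mem_prod, eq_comm]
  rw [this, Measure.volume_eq_prod _ _, Measure.prod_prod]
  simp

def SS (d : ℕ) (a b c : ℝ) (p : Euc d × ℝ) : ℝ :=
  (b - a) * p.2 ^ 2 + a * (1 - ‖p.1‖ ^ 2) + c * ‖p.1‖ ^ 2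

lemma psiDInv_eq (d : ℕ) (a b c : ℝ) (p : Euc d × ℝ) :
    psiDInv d a b c p = (p.1, Real.sqrt (SS d a b c p)) := rfl

lemma SS_pos {d : ℕ} {a b c : ℝ} (ha : 0 ≤ a) (hab : a < b) (hc : 0 ≤ c)
    {p : Euc d × ℝ} (hp : p ∈ sReg d) : 0 < SS d a b c p := by
  have h1 : ‖p.1‖ ^ 2 ≤ 1 := by nlinarith [hp.1, sq_nonneg p.2]
  have h2 : 0 < p.2 := hp.2
  have h3 : (0:ℝ) ≤ ‖p.1‖ ^ 2 := sq_nonneg _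
  have t1 : 0 < (b - a) * p.2 ^ 2 := mul_pos (by linarith) (pow_pos h2 2)
  have t2 : 0 ≤ a * (1 - ‖p.1‖ ^ 2) := mul_nonneg ha (by linarith)
  have t3 : 0 ≤ c * ‖p.1‖ ^ 2 := mul_nonneg hc h3
  unfold SS
  linarith

def DD (d : ℕ) (a b c : ℝ) (p : Euc d × ℝ) : (Euc d × ℝ) →L[ℝ] (Euc d × ℝ) :=
  (ContinuousLinearMap.fst ℝ (Euc d) ℝ).prod
    (((((c - a) / Real.sqrt (SS d a b c p)) • (innerSL ℝ p.1)).comp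
        (ContinuousLinearMap.fst ℝ (Euc d) ℝ))
      + ((b - a) * p.2 / Real.sqrt (SS d a b c p)) • ContinuousLinearMap.snd ℝ (Euc d) ℝ)

lemma DD_apply (d : ℕ) (a b c : ℝ) (p : Euc d × ℝ) (u : Euc d) (w : ℝ) :
    DD d a b c p (u, w)
      = (u, (((c - a) / Real.sqrt (SS d a b c p)) • (innerSL ℝ p.1)) u
          + ((b - a) * p.2 / Real.sqrt (SS d a b c p)) * w) := by
  simp [DD]

lemma det_DD (d : ℕ) (a b c : ℝ) (p : Euc d × ℝ) :
    (DD d a b c p).det = (b - a) * p.2 / Real.sqrt (SS d a b c p) :=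
  det_aux _ (((c - a) / Real.sqrt (SS d a b c p)) • (innerSL ℝ p.1)) _
    (fun u w => DD_apply d a b c p u w)

lemma hasFDerivAt_psiDInv (d : ℕ) (a b c : ℝ) (p : Euc d × ℝ)
    (hpos : 0 < SS d a b c p) :
    HasFDerivAt (psiDInv d a b c) (DD d a b c p) p := by
  have hτ : (0:ℝ) < Real.sqrt (SS d a b c p) := Real.sqrt_pos.2 hpos
  have h1 : HasFDerivAt (fun q : Euc d × ℝ => ‖q.1‖ ^ 2)
      (2 • (innerSL ℝ p.1).comp (ContinuousLinearMap.fst ℝ (Euc d) ℝ)) p :=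
    (hasFDerivAt_fst (p := p)).norm_sq
  have h2 : HasFDerivAt (fun q : Euc d × ℝ => q.2 ^ 2)
      (p.2 • ContinuousLinearMap.snd ℝ (Euc d) ℝ
        + p.2 • ContinuousLinearMap.snd ℝ (Euc d) ℝ) p := by
    rw [show (fun q : Euc d × ℝ => q.2 ^ 2) = fun q => q.2 * q.2 from funext fun q => pow_two _]
    exact HasFDerivAt.mul (hasFDerivAt_snd (𝕜 := ℝ) (p := p)) (hasFDerivAt_snd (𝕜 := ℝ) (p := p))
  have hS : HasFDerivAt (fun q : Euc d × ℝ => SS d a b c q)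
      ((b - a) • (p.2 • ContinuousLinearMap.snd ℝ (Euc d) ℝ
          + p.2 • ContinuousLinearMap.snd ℝ (Euc d) ℝ)
        + a • (-(2 • (innerSL ℝ p.1).comp (ContinuousLinearMap.fst ℝ (Euc d) ℝ)))
        + c • (2 • (innerSL ℝ p.1).comp (ContinuousLinearMap.fst ℝ (Euc d) ℝ))) p := by
    have hA := h2.const_mul (b - a)
    have hB := (h1.const_sub 1).const_mul a
    have hC := h1.const_mul c
    exact (hA.add hB).add hC
  have hsq := (Real.hasDerivAt_sqrt (ne_of_gt hpos)).comp_hasFDerivAt p hS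
  have hprod := HasFDerivAt.prodMk (hasFDerivAt_fst (p := p)) hsq
  have heq : (ContinuousLinearMap.fst ℝ (Euc d) ℝ).prod
      ((1 / (2 * Real.sqrt (SS d a b c p))) •
        ((b - a) • (p.2 • ContinuousLinearMap.snd ℝ (Euc d) ℝ
            + p.2 • ContinuousLinearMap.snd ℝ (Euc d) ℝ)
          + a • (-(2 • (innerSL ℝ p.1).comp (ContinuousLinearMap.fst ℝ (Euc d) ℝ)))
          + c • (2 • (innerSL ℝ p.1).comp (ContinuousLinearMap.fst ℝ (Euc d) ℝ))))
      = DD d a b c p := by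
    apply ContinuousLinearMap.ext
    rintro ⟨u, w⟩
    rw [DD_apply]
    refine Prod.ext rfl ?_
    simp only [ContinuousLinearMap.prod_apply, ContinuousLinearMap.smul_apply,
      ContinuousLinearMap.add_apply, ContinuousLinearMap.neg_apply,
      ContinuousLinearMap.comp_apply, ContinuousLinearMap.coe_fst',
      ContinuousLinearMap.coe_snd', smul_eq_mul]
    have hne : Real.sqrt (SS d a b c p) ≠ 0 := ne_of_gt hτ
    field_simp
    ring
  rw [← heq]
  exact hprod

lemma injOn_psiDInv (d : ℕ) (a b c : ℝ) (ha : 0 ≤ a) (hab : a < b) (hc : 0 ≤ c) :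
    Set.InjOn (psiDInv d a b c) (sReg d) := by
  intro p hp q hq hpq
  obtain ⟨h1a, h2a⟩ := Prod.ext_iff.mp hpq
  have h1 : p.1 = q.1 := h1a
  have hSp := SS_pos ha hab hc hp
  have hSq := SS_pos ha hab hc hq
  have h2 : Real.sqrt (SS d a b c p) = Real.sqrt (SS d a b c q) := h2a
  have h3 : SS d a b c p = SS d a b c q := by
    rw [← Real.sq_sqrt hSp.le, ← Real.sq_sqrt hSq.le, h2]
  have h4 : p.2 = q.2 := by
    unfold SS at h3
    rw [h1] at h3
    have hb : (0:ℝ) < b - a := by linarith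
    have : p.2 ^ 2 = q.2 ^ 2 := by nlinarith
    nlinarith [hp.2, hq.2]
  exact Prod.ext h1 h4

lemma img_sub (d : ℕ) (a b c : ℝ) (ha : 0 ≤ a) (hab : a < b) (hc : 0 ≤ c) :
    psiDInv d a b c '' sReg d ⊆ LamD d a b c := by
  rintro _ ⟨p, hp, rfl⟩
  have hS0 := SS_pos ha hab hc hp
  have hr1 : ‖p.1‖ ^ 2 ≤ 1 := by nlinarith [hp.1, sq_nonneg p.2]
  have hsq : Real.sqrt (SS d a b c p) ^ 2 = SS d a b c p := Real.sq_sqrt hS0.le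
  rw [psiDInv_eq]
  refine ⟨Real.sqrt_nonneg _, ?_, ?_, ?_⟩
  · show ‖p.1‖ ≤ 1
    nlinarith [norm_nonneg p.1]
  · show a + (c - a) * ‖p.1‖ ^ 2 ≤ Real.sqrt (SS d a b c p) ^ 2
    rw [hsq]
    unfold SS
    nlinarith [mul_nonneg (le_of_lt (by linarith : (0:ℝ) < b - a)) (sq_nonneg p.2)]
  · show Real.sqrt (SS d a b c p) ^ 2 ≤ b + (c - b) * ‖p.1‖ ^ 2
    rw [hsq]
    unfold SS
    nlinarith [mul_nonneg (le_of_lt (by linarith : (0:ℝ) < b - a))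
      (by linarith [hp.1] : (0:ℝ) ≤ 1 - ‖p.1‖ ^ 2 - p.2 ^ 2)]

lemma sub_img (d : ℕ) (a b c : ℝ) (ha : 0 ≤ a) (hab : a < b) (hc : 0 ≤ c) :
    LamD d a b c \ psiDInv d a b c '' sReg d
      ⊆ {p : Euc d × ℝ | p.2 ^ 2 = a + (c - a) * ‖p.1‖ ^ 2} := by
  rintro p ⟨hp, hnot⟩
  obtain ⟨hp1, hp2, hp3, hp4⟩ := hp
  by_contra hne
  apply hnot
  have hgt : a + (c - a) * ‖p.1‖ ^ 2 < p.2 ^ 2 := lt_of_le_of_ne hp3 (Ne.symm hne)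
  have hb : (0:ℝ) < b - a := by linarith
  set u : ℝ := (p.2 ^ 2 - (a + (c - a) * ‖p.1‖ ^ 2)) / (b - a) with hu_def
  have hu : 0 < u := div_pos (by linarith) hb
  set v : ℝ := Real.sqrt u with hv_def
  have hv : 0 < v := Real.sqrt_pos.2 hu
  have hv2 : v ^ 2 = u := Real.sq_sqrt hu.le
  refine ⟨(p.1, v), ⟨?_, hv⟩, ?_⟩
  · show ‖p.1‖ ^ 2 + v ^ 2 ≤ 1
    have hu1 : u ≤ 1 - ‖p.1‖ ^ 2 := by
      rw [hu_def, div_le_iff₀ hb]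
      nlinarith
    rw [hv2]
    linarith
  · rw [psiDInv_eq]
    have hSv : SS d a b c (p.1, v) = p.2 ^ 2 := by
      unfold SS
      simp only
      rw [hv2, hu_def]
      field_simp
      ring
    refine Prod.ext rfl ?_
    simp only
    rw [hSv, Real.sqrt_sq hp1]

lemma ae_lam_img (d : ℕ) (a b c : ℝ) (ha : 0 ≤ a) (hab : a < b) (hc : 0 ≤ c) :
    LamD d a b c =ᵐ[volume] psiDInv d a b c '' sReg d := by
  rw [ae_eq_set]
  constructor
  · exact measure_mono_null (sub_img d a b c ha hab hc) (null_graph d a c)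
  · have : psiDInv d a b c '' sReg d \ LamD d a b c = ∅ :=
      Set.diff_eq_empty.mpr (img_sub d a b c ha hab hc)
    rw [this]; exact measure_empty

lemma ae_sreg_ball (d : ℕ) : sReg d =ᵐ[volume] ballPlus d := by
  rw [ae_eq_set]
  constructor
  · have : sReg d \ ballPlus d = ∅ := by
      apply Set.diff_eq_empty.mpr
      intro p hp
      exact ⟨hp.1, hp.2.le⟩
    rw [this]; exact measure_empty
  · refine measure_mono_null ?_ (null_v0 d)
    intro p hp
    have h1 := hp.1
    have h2 := hp.2
    by_contra hne
    exact h2 ⟨h1.1, lt_of_le_of_ne h1.2 (Ne.symm hne)⟩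

lemma cov (d : ℕ) (a b c β γ : ℝ) (ha : 0 ≤ a) (hab : a < b) (hc : 0 ≤ c)
    (F : Euc d × ℝ → ℝ) :
    (∫ p in LamD d a b c,
        F (p.1, Real.sqrt ((-a + (a - c) * ‖p.1‖ ^ 2 + p.2 ^ 2) / (b - a)))
          * WD d a b c β γ p)
      = (b - a) * ∫ p in ballPlus d,
          F p * (|p.2| ^ (2 * β) * (1 - ‖p.1‖ ^ 2 - p.2 ^ 2) ^ γ) := by
  have hb : (0:ℝ) < b - a := by linarith
  set g : Euc d × ℝ → ℝ := fun p =>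
    F (p.1, Real.sqrt ((-a + (a - c) * ‖p.1‖ ^ 2 + p.2 ^ 2) / (b - a)))
      * WD d a b c β γ p with hg
  have step1 : (∫ p in LamD d a b c, g p)
      = ∫ p in psiDInv d a b c '' sReg d, g p :=
    setIntegral_congr_set (ae_lam_img d a b c ha hab hc)
  have step2 : (∫ p in psiDInv d a b c '' sReg d, g p)
      = ∫ p in sReg d, |(DD d a b c p).det| • g (psiDInv d a b c p) :=
    integral_image_eq_integral_abs_det_fderiv_smul volume (measurableSet_sReg d)
      (fun p hp => (hasFDerivAt_psiDInv d a b c p (SS_pos ha hab hc hp)).hasFDerivWithinAt)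
      (injOn_psiDInv d a b c ha hab hc) g
  have step3 : (∫ p in sReg d, |(DD d a b c p).det| • g (psiDInv d a b c p))
      = ∫ p in sReg d,
          (b - a) • (F p * (|p.2| ^ (2 * β) * (1 - ‖p.1‖ ^ 2 - p.2 ^ 2) ^ γ)) := by
    refine setIntegral_congr_fun (measurableSet_sReg d) fun p hp => ?_
    have hS0 := SS_pos ha hab hc hp
    have hv : (0:ℝ) < p.2 := hp.2
    have hτ : (0:ℝ) < Real.sqrt (SS d a b c p) := Real.sqrt_pos.2 hS0
    have hτ2 : Real.sqrt (SS d a b c p) ^ 2 = SS d a b c p := Real.sq_sqrt hS0.le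
    set τ : ℝ := Real.sqrt (SS d a b c p) with hτdef
    -- key numerator identities
    have e1 : (-a + (a - c) * ‖p.1‖ ^ 2 + τ ^ 2) / (b - a) = p.2 ^ 2 := by
      rw [hτ2]
      unfold SS
      field_simp
      ring
    have e2 : (b - (b - c) * ‖p.1‖ ^ 2 - τ ^ 2) / (b - a) = 1 - ‖p.1‖ ^ 2 - p.2 ^ 2 := by
      rw [hτ2]
      unfold SS
      field_simp
      ring
    have hback : (p.1, Real.sqrt ((-a + (a - c) * ‖p.1‖ ^ 2 + τ ^ 2) / (b - a))) = p := by
      refine Prod.ext rfl ?_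
      simp only
      rw [e1, Real.sqrt_sq hv.le]
    have hWD : WD d a b c β γ (psiDInv d a b c p)
        = τ * (p.2 ^ 2) ^ (β - 1 / 2) * (1 - ‖p.1‖ ^ 2 - p.2 ^ 2) ^ γ := by
      rw [psiDInv_eq]
      unfold WD
      simp only
      rw [← hτdef, e1, e2]
    have hdet : |(DD d a b c p).det| = (b - a) * p.2 / τ := by
      rw [det_DD, ← hτdef, abs_of_pos (div_pos (mul_pos hb hv) hτ)]
    have hpow : p.2 * (p.2 ^ 2) ^ (β - 1 / 2) = |p.2| ^ (2 * β) := by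
      rw [abs_of_pos hv]
      rw [← Real.rpow_natCast p.2 2, ← Real.rpow_mul hv.le]
      nth_rewrite 1 [← Real.rpow_one p.2]
      rw [← Real.rpow_add hv]
      congr 1
      push_cast
      ring
    rw [hg]
    simp only
    rw [psiDInv_eq]
    simp only
    rw [← hτdef, hback, hdet, ← psiDInv_eq]
    rw [hWD] -- careful: WD (psiDInv p) occurrence
    rw [smul_eq_mul, smul_eq_mul]
    have hτne : τ ≠ 0 := ne_of_gt hτ
    rw [← hpow]
    field_simp
  have step4 : (∫ p in sReg d,
        (b - a) • (F p * (|p.2| ^ (2 * β) * (1 - ‖p.1‖ ^ 2 - p.2 ^ 2) ^ γ)))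
      = ∫ p in ballPlus d,
          (b - a) • (F p * (|p.2| ^ (2 * β) * (1 - ‖p.1‖ ^ 2 - p.2 ^ 2) ^ γ)) :=
    setIntegral_congr_set (ae_sreg_ball d)
  rw [step1, step2, step3, step4, integral_smul]
  rw [smul_eq_mul]

lemma ballPlus_weight_nonneg (d : ℕ) (β γ : ℝ) {p : Euc d × ℝ} (hp : p ∈ ballPlus d) :
    0 ≤ |p.2| ^ (2 * β) * (1 - ‖p.1‖ ^ 2 - p.2 ^ 2) ^ γ := by
  have h1 : (0:ℝ) ≤ 1 - ‖p.1‖ ^ 2 - p.2 ^ 2 := by linarith [hp.1]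
  exact mul_nonneg (Real.rpow_nonneg (abs_nonneg _) _) (Real.rpow_nonneg h1 _)

lemma pair_integral (d : ℕ) (a b c β γ q : ℝ) (ha : 0 ≤ a) (hab : a < b) (hc : 0 ≤ c)
    (f : Euc d × ℝ → ℝ) (P P' : MvPolynomial (Fin (d + 1)) ℝ)
    (hM : ∀ w ∈ ballPlus d, evP d P (psiDInv d a b c w) = evP d P' w) :
    (∫ p in LamD d a b c, |f p - evP d P p| ^ q * WD d a b c β γ p)
      = (b - a) * ∫ p in ballPlus d,
          |f (psiDInv d a b c p) - evP d P' p| ^ q *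
            (|p.2| ^ (2 * β) * (1 - ‖p.1‖ ^ 2 - p.2 ^ 2) ^ γ) := by
  have hb : (0:ℝ) < b - a := by linarith
  set F : Euc d × ℝ → ℝ := fun p => |f (psiDInv d a b c p) - evP d P' p| ^ q with hF
  have hcov := cov d a b c β γ ha hab hc F
  rw [← hcov]
  refine setIntegral_congr_fun (measurableSet_LamD d a b c) fun p hp => ?_
  obtain ⟨hp1, hp2, hp3, hp4⟩ := hp
  set u : ℝ := (-a + (a - c) * ‖p.1‖ ^ 2 + p.2 ^ 2) / (b - a) with hu_def
  have hu0 : 0 ≤ u := div_nonneg (by linarith) hb.le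
  set v : ℝ := Real.sqrt u with hv_def
  have hv0 : 0 ≤ v := Real.sqrt_nonneg _
  have hv2 : v ^ 2 = u := Real.sq_sqrt hu0
  have hQ : ((p.1, v) : Euc d × ℝ) ∈ ballPlus d := by
    refine ⟨?_, hv0⟩
    show ‖p.1‖ ^ 2 + v ^ 2 ≤ 1
    have : u ≤ 1 - ‖p.1‖ ^ 2 := by
      rw [hu_def, div_le_iff₀ hb]
      nlinarith
    rw [hv2]
    linarith
  have hPD : psiDInv d a b c ((p.1, v) : Euc d × ℝ) = p := by
    rw [psiDInv_eq]
    refine Prod.ext rfl ?_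
    show Real.sqrt (SS d a b c ((p.1, v) : Euc d × ℝ)) = p.2
    have hSv : SS d a b c ((p.1, v) : Euc d × ℝ) = p.2 ^ 2 := by
      unfold SS
      simp only
      rw [hv2, hu_def]
      field_simp
      ring
    rw [hSv, Real.sqrt_sq hp1]
  have key : F ((p.1, v) : Euc d × ℝ) = |f p - evP d P p| ^ q := by
    rw [hF]
    simp only
    rw [hPD, ← hM ((p.1, v) : Euc d × ℝ) hQ, hPD]
  show |f p - evP d P p| ^ q * WD d a b c β γ p = F ((p.1, v) : Euc d × ℝ) * WD d a b c β γ p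
  rw [key]

theorem best_approximation_transfers_D'
    (d : ℕ) (hd : 1 ≤ d) (a b c β γ : ℝ) (ha : 0 ≤ a) (hab : a < b) (hc : 0 ≤ c)
    (hβ : -(1 : ℝ) / 2 < β) (hγ : -1 < γ) (n : ℕ) (q : ℝ) (hq : 1 ≤ q)
    (f : Euc d × ℝ → ℝ) (hf : Measurable f)
    (hfint : IntegrableOn (fun p => |f p| ^ q * WD d a b c β γ p) (LamD d a b c)) :
    sInf {r : ℝ | ∃ P : MvPolynomial (Fin (d + 1)) ℝ, P.totalDegree ≤ n ∧
        EvenLast d P ∧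
        r = (∫ p in LamD d a b c,
              |f p - evP d P p| ^ q * WD d a b c β γ p) ^ (1 / q)}
      = (b - a) ^ (1 / q) *
        sInf {r : ℝ | ∃ P : MvPolynomial (Fin (d + 1)) ℝ, P.totalDegree ≤ n ∧
          EvenLast d P ∧
          r = (∫ p in ballPlus d,
                |f (psiDInv d a b c p) - evP d P p| ^ q *
                  (|p.2| ^ (2 * β) * (1 - ‖p.1‖ ^ 2 - p.2 ^ 2) ^ γ)) ^ (1 / q)} := by
  have hb : (0:ℝ) < b - a := by linarith
  have hk0 : (0:ℝ) ≤ (b - a) ^ (1 / q) := Real.rpow_nonneg hb.le _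
  have hballnn : ∀ P' : MvPolynomial (Fin (d + 1)) ℝ,
      0 ≤ ∫ p in ballPlus d,
        |f (psiDInv d a b c p) - evP d P' p| ^ q *
          (|p.2| ^ (2 * β) * (1 - ‖p.1‖ ^ 2 - p.2 ^ 2) ^ γ) := by
    intro P'
    refine setIntegral_nonneg (measurableSet_ballPlus d) fun p hp => ?_
    exact mul_nonneg (Real.rpow_nonneg (abs_nonneg _) _) (ballPlus_weight_nonneg d β γ hp)
  have hAB : {r : ℝ | ∃ P : MvPolynomial (Fin (d + 1)) ℝ, P.totalDegree ≤ n ∧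
        EvenLast d P ∧
        r = (∫ p in LamD d a b c,
              |f p - evP d P p| ^ q * WD d a b c β γ p) ^ (1 / q)}
      = ((b - a) ^ (1 / q)) •
        {r : ℝ | ∃ P : MvPolynomial (Fin (d + 1)) ℝ, P.totalDegree ≤ n ∧
          EvenLast d P ∧
          r = (∫ p in ballPlus d,
                |f (psiDInv d a b c p) - evP d P p| ^ q *
                  (|p.2| ^ (2 * β) * (1 - ‖p.1‖ ^ 2 - p.2 ^ 2) ^ γ)) ^ (1 / q)} := by
    ext r
    constructor
    · rintro ⟨P, hdeg, hev, rfl⟩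
      obtain ⟨P', hdeg', hev', hM⟩ := forward_pair d a b c ha hab hc P hdeg hev
      refine ⟨(∫ p in ballPlus d,
          |f (psiDInv d a b c p) - evP d P' p| ^ q *
            (|p.2| ^ (2 * β) * (1 - ‖p.1‖ ^ 2 - p.2 ^ 2) ^ γ)) ^ (1 / q),
        ⟨P', hdeg', hev', rfl⟩, ?_⟩
      simp only [smul_eq_mul]
      rw [← Real.mul_rpow hb.le (hballnn P'),
        ← pair_integral d a b c β γ q ha hab hc f P P' hM]
    · rintro ⟨r₀, ⟨P', hdeg', hev', rfl⟩, rfl⟩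
      obtain ⟨P, hdeg, hev, hM⟩ := backward_pair d a b c ha hab hc P' hdeg' hev'
      refine ⟨P, hdeg, hev, ?_⟩
      rw [pair_integral d a b c β γ q ha hab hc f P P' hM,
        Real.mul_rpow hb.le (hballnn P')]
      simp only [smul_eq_mul]
  rw [hAB, Real.sInf_smul_of_nonneg hk0, smul_eq_mul]

/-- the error of best `L^p` approximation by polynomials of degree at
most `n`, even in the last variable, is the same on `Λ^{d+1}_{a,b,c}` and on `B^{d+1}₊`
up to the factor `(b−a)^{1/p}`. -/
theorem best_approximation_transfers_D
    (d : ℕ) (hd : 1 ≤ d) (a b c β γ : ℝ) (ha : 0 ≤ a) (hab : a < b) (hc : 0 ≤ c)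
    (hβ : -(1 : ℝ) / 2 < β) (hγ : -1 < γ) (n : ℕ) (q : ℝ) (hq : 1 ≤ q)
    (f : Euc d × ℝ → ℝ) (hf : Measurable f)
    (hfint : IntegrableOn (fun p => |f p| ^ q * WD d a b c β γ p) (LamD d a b c)) :
    sInf {r : ℝ | ∃ P : MvPolynomial (Fin (d + 1)) ℝ, P.totalDegree ≤ n ∧
        EvenLast d P ∧
        r = (∫ p in LamD d a b c,
              |f p - evP d P p| ^ q * WD d a b c β γ p) ^ (1 / q)}
      = (b - a) ^ (1 / q) *
        sInf {r : ℝ | ∃ P : MvPolynomial (Fin (d + 1)) ℝ, P.totalDegree ≤ n ∧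
          EvenLast d P ∧
          r = (∫ p in ballPlus d,
                |f (psiDInv d a b c p) - evP d P p| ^ q *
                  (|p.2| ^ (2 * β) * (1 - ‖p.1‖ ^ 2 - p.2 ^ 2) ^ γ)) ^ (1 / q)} :=
  best_approximation_transfers_D' d hd a b c β γ ha hab hc hβ hγ n q hq f hf hfint
end
end

section
/- Let d ≥ 1, c ≥ 0 and r ≥ 1 an integer. On the open set U₀ = {(x,t) ∈ ℝ^d×ℝ : t > 0, t² − c‖x‖² > 0}, define the first-order operators 𝔇_i g = ∂_{x_i} g + c·(x_i/t)·∂_t g for 1 ≤ i ≤ d and 𝔇_{d+1} g = (sqrt(t²−c‖x‖²)/t)·∂_t g. Let g be r times continuously differentiable on an open set U ⊆ U₀. Then for each 1 ≤ i ≤ d+1 and every point of U, the r-fold application satisfies 𝔇_i^r g = (∂_{y_i}^r (g∘ψ⁻¹))∘ψ, where g∘ψ⁻¹ is defined on ψ(U) ⊆ {(y,v) : v > 0} and ∂_{y_i} denotes the partial derivative in the i-th coordinate of ℝ^{d+1}. -/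
open MeasureTheory

noncomputable section

/-- The map `ψ(x,t) = (x, sqrt(t²−c‖x‖²))` (the case `a = 0`, `b = 1`). -/
def psi0 (d : ℕ) (c : ℝ) (p : Euc d × ℝ) : Euc d × ℝ :=
  (p.1, Real.sqrt (p.2 ^ 2 - c * ‖p.1‖ ^ 2))

/-- The inverse map `ψ⁻¹(y,v) = (y, sqrt(v²+c‖y‖²))`. -/
def psi0Inv (d : ℕ) (c : ℝ) (p : Euc d × ℝ) : Euc d × ℝ :=
  (p.1, Real.sqrt (p.2 ^ 2 + c * ‖p.1‖ ^ 2))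

/-- Partial derivative in the `i`-th coordinate of `ℝ^d`, for functions on `ℝ^d × ℝ`. -/
def pdE (d : ℕ) (i : Fin d) (f : Euc d × ℝ → ℝ) (p : Euc d × ℝ) : ℝ :=
  fderiv ℝ f p (EuclideanSpace.single i 1, 0)

/-- Partial derivative in the last coordinate, for functions on `ℝ^d × ℝ`. -/
def pdT (d : ℕ) (f : Euc d × ℝ → ℝ) (p : Euc d × ℝ) : ℝ :=
  fderiv ℝ f p (0, 1)

/-- The first-order operators `𝔇_i`, `1 ≤ i ≤ d+1`:
`𝔇_i g = ∂_{x_i} g + c (x_i/t) ∂_t g` for `i ≤ d` and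
`𝔇_{d+1} g = (sqrt(t²−c‖x‖²)/t) ∂_t g`. -/
def Dfrak (d : ℕ) (c : ℝ) (i : Fin (d + 1)) (g : Euc d × ℝ → ℝ) :
    Euc d × ℝ → ℝ := fun p =>
  if h : (i : ℕ) < d then
    pdE d ⟨i, h⟩ g p + c * (p.1 ⟨i, h⟩ / p.2) * pdT d g p
  else
    (Real.sqrt (p.2 ^ 2 - c * ‖p.1‖ ^ 2) / p.2) * pdT d g p

/-- The partial derivative `∂_{y_i}` in the `i`-th coordinate of `ℝ^{d+1}`. -/
def Pder (d : ℕ) (i : Fin (d + 1)) (g : Euc d × ℝ → ℝ) : Euc d × ℝ → ℝ := fun p =>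
  if h : (i : ℕ) < d then pdE d ⟨i, h⟩ g p else pdT d g p

-- ψ⁻¹ ∘ ψ = id
lemma psi0Inv_psi0 {d : ℕ} {c : ℝ} {p : Euc d × ℝ} (h1 : 0 < p.2)
    (h2 : 0 ≤ p.2 ^ 2 - c * ‖p.1‖ ^ 2) : psi0Inv d c (psi0 d c p) = p := by
  unfold psi0 psi0Inv
  have : Real.sqrt (p.2 ^ 2 - c * ‖p.1‖ ^ 2) ^ 2 = p.2 ^ 2 - c * ‖p.1‖ ^ 2 :=
    Real.sq_sqrt h2
  ext
  · rfl
  · simp only [this]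
    rw [show p.2 ^ 2 - c * ‖p.1‖ ^ 2 + c * ‖p.1‖ ^ 2 = p.2 ^ 2 by ring,
      Real.sqrt_sq h1.le]

-- ψ ∘ ψ⁻¹ = id on {v > 0} (needs c ≥ 0)
lemma psi0_psi0Inv {d : ℕ} {c : ℝ} (hc : 0 ≤ c) {q : Euc d × ℝ} (h1 : 0 < q.2) :
    psi0 d c (psi0Inv d c q) = q := by
  unfold psi0 psi0Inv
  have hnn : (0:ℝ) ≤ q.2 ^ 2 + c * ‖q.1‖ ^ 2 := by positivity
  have : Real.sqrt (q.2 ^ 2 + c * ‖q.1‖ ^ 2) ^ 2 = q.2 ^ 2 + c * ‖q.1‖ ^ 2 :=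
    Real.sq_sqrt hnn
  ext
  · rfl
  · simp only [this]
    rw [show q.2 ^ 2 + c * ‖q.1‖ ^ 2 - c * ‖q.1‖ ^ 2 = q.2 ^ 2 by ring,
      Real.sqrt_sq h1.le]

-- derivative of ψ⁻¹
lemma hasFDerivAt_psi0Inv (d : ℕ) (c : ℝ) (q : Euc d × ℝ)
    (hq : 0 < q.2 ^ 2 + c * ‖q.1‖ ^ 2) :
    HasFDerivAt (psi0Inv d c)
      ((ContinuousLinearMap.fst ℝ (Euc d) ℝ).prod
        ((1 / (2 * Real.sqrt (q.2 ^ 2 + c * ‖q.1‖ ^ 2))) •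
          (((2 * q.2) • ContinuousLinearMap.snd ℝ (Euc d) ℝ) +
            c • (2 • ((innerSL ℝ q.1).comp (ContinuousLinearMap.fst ℝ (Euc d) ℝ)))))) q := by
  apply HasFDerivAt.prodMk (hasFDerivAt_fst)
  have hu : HasFDerivAt (fun z : Euc d × ℝ => z.2 ^ 2 + c * ‖z.1‖ ^ 2)
      (((2 * q.2) • ContinuousLinearMap.snd ℝ (Euc d) ℝ) +
        c • (2 • ((innerSL ℝ q.1).comp (ContinuousLinearMap.fst ℝ (Euc d) ℝ)))) q := by
    have h1 : HasFDerivAt (fun z : Euc d × ℝ => z.2 ^ 2)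
        ((2 * q.2) • ContinuousLinearMap.snd ℝ (Euc d) ℝ) q := by
      have h := (hasFDerivAt_snd (𝕜 := ℝ) (E := Euc d) (F := ℝ) (p := q)).mul
        (hasFDerivAt_snd (𝕜 := ℝ) (E := Euc d) (F := ℝ) (p := q))
      rw [show (fun z : Euc d × ℝ => z.2 ^ 2) = fun z => z.2 * z.2 from by ext z; ring,
        two_mul, add_smul]
      exact h
    have h2 : HasFDerivAt (fun z : Euc d × ℝ => ‖z.1‖ ^ 2)
        (2 • ((innerSL ℝ q.1).comp (ContinuousLinearMap.fst ℝ (Euc d) ℝ))) q :=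
      (hasFDerivAt_fst (𝕜 := ℝ) (E := Euc d) (F := ℝ) (p := q)).norm_sq
    exact h1.add (h2.const_mul c)
  exact hu.sqrt (ne_of_gt hq)

lemma fderiv_dir_decomp (d : ℕ) (g : Euc d × ℝ → ℝ) (p : Euc d × ℝ) (w : Euc d) (a : ℝ) :
    fderiv ℝ g p (w, a) = fderiv ℝ g p (w, 0) + a * fderiv ℝ g p (0, 1) := by
  have h : ((w, a) : Euc d × ℝ) = (w, 0) + a • ((0 : Euc d), (1 : ℝ)) := by
    simp [Prod.ext_iff]
  rw [h, map_add, _root_.map_smul, smul_eq_mul]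

lemma key_step (d : ℕ) (c : ℝ) (hc : 0 ≤ c) (i : Fin (d + 1)) (g : Euc d × ℝ → ℝ)
    (p : Euc d × ℝ) (h1 : 0 < p.2) (h2 : 0 < p.2 ^ 2 - c * ‖p.1‖ ^ 2)
    (hg : DifferentiableAt ℝ g p) :
    Pder d i (g ∘ psi0Inv d c) (psi0 d c p) = Dfrak d c i g p := by
  set q := psi0 d c p with hqdef
  have hq2 : q.2 = Real.sqrt (p.2 ^ 2 - c * ‖p.1‖ ^ 2) := rfl
  have hq1 : q.1 = p.1 := rfl
  have hsum : q.2 ^ 2 + c * ‖q.1‖ ^ 2 = p.2 ^ 2 := by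
    rw [hq2, hq1, Real.sq_sqrt h2.le]; ring
  have hpos : 0 < q.2 ^ 2 + c * ‖q.1‖ ^ 2 := by rw [hsum]; positivity
  have hΦq : psi0Inv d c q = p := psi0Inv_psi0 h1 h2.le
  have hL := hasFDerivAt_psi0Inv d c q hpos
  have hgp : HasFDerivAt g (fderiv ℝ g p) (psi0Inv d c q) := by
    rw [hΦq]; exact hg.hasFDerivAt
  have hcomp := hgp.comp q hL
  have hfd := hcomp.fderiv
  have hsq : Real.sqrt (q.2 ^ 2 + c * ‖q.1‖ ^ 2) = p.2 := by
    rw [hsum, Real.sqrt_sq h1.le]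
  by_cases h : (i : ℕ) < d
  · simp only [Pder, Dfrak, dif_pos h, pdE, pdT]
    rw [hfd]
    simp only [ContinuousLinearMap.comp_apply, ContinuousLinearMap.prod_apply,
      ContinuousLinearMap.coe_fst', ContinuousLinearMap.smul_apply,
      ContinuousLinearMap.add_apply, ContinuousLinearMap.coe_snd',
      ContinuousLinearMap.coe_smul', Pi.smul_apply, innerSL_apply_apply, hsq,
      smul_eq_mul]
    rw [fderiv_dir_decomp]
    have hin : (inner ℝ q.1 (EuclideanSpace.single ⟨(i : ℕ), h⟩ (1:ℝ)) : ℝ) = p.1 ⟨(i : ℕ), h⟩ := by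
      rw [hq1]; simp [EuclideanSpace.inner_single_right]
    rw [hin]
    have hne : p.2 ≠ 0 := h1.ne'
    congr 1
    field_simp
    ring
  · simp only [Pder, Dfrak, dif_neg h, pdT]
    rw [hfd]
    simp only [ContinuousLinearMap.comp_apply, ContinuousLinearMap.prod_apply,
      ContinuousLinearMap.coe_fst', ContinuousLinearMap.smul_apply,
      ContinuousLinearMap.add_apply, ContinuousLinearMap.coe_snd',
      ContinuousLinearMap.coe_smul', Pi.smul_apply, innerSL_apply_apply, hsq,
      smul_eq_mul]
    rw [fderiv_dir_decomp]
    have hz : fderiv ℝ g p ((0 : Euc d), (0:ℝ)) = 0 := by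
      rw [show ((0 : Euc d), (0:ℝ)) = (0 : Euc d × ℝ) from rfl, map_zero]
    rw [hz]
    have hne : p.2 ≠ 0 := h1.ne'
    rw [← hq2]
    rw [inner_zero_right]
    field_simp
    ring

lemma Pder_iterate_congr (d : ℕ) (i : Fin (d + 1)) (r : ℕ) {V : Set (Euc d × ℝ)}
    (hV : IsOpen V) :
    ∀ f₁ f₂ : Euc d × ℝ → ℝ, (∀ q ∈ V, f₁ q = f₂ q) →
      ∀ q ∈ V, (Pder d i)^[r] f₁ q = (Pder d i)^[r] f₂ q := by
  induction r with
  | zero => intro f₁ f₂ h q hq; simpa using h q hq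
  | succ r ih =>
    intro f₁ f₂ h q hq
    rw [Function.iterate_succ_apply, Function.iterate_succ_apply]
    refine ih _ _ (fun q' hq' => ?_) q hq
    have hf : fderiv ℝ f₁ q' = fderiv ℝ f₂ q' :=
      Filter.EventuallyEq.fderiv_eq (Filter.eventuallyEq_of_mem (hV.mem_nhds hq') h)
    simp only [Pder, pdE, pdT, hf]

lemma Dfrak_contDiffOn (d : ℕ) (c : ℝ) (i : Fin (d + 1)) (r : ℕ) {U : Set (Euc d × ℝ)}
    (hUopen : IsOpen U)
    (hUsub : U ⊆ {p : Euc d × ℝ | 0 < p.2 ∧ 0 < p.2 ^ 2 - c * ‖p.1‖ ^ 2})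
    {g : Euc d × ℝ → ℝ} (hg : ContDiffOn ℝ (r + 1 : ℕ) g U) :
    ContDiffOn ℝ r (Dfrak d c i g) U := by
  have hfd : ContDiffOn ℝ r (fderiv ℝ g) U :=
    hg.fderiv_of_isOpen hUopen (by exact_mod_cast le_refl (r + 1))
  have hpdT : ContDiffOn ℝ r (pdT d g) U := hfd.clm_apply contDiffOn_const
  have ht : ContDiffOn ℝ r (fun p : Euc d × ℝ => p.2) U := contDiff_snd.contDiffOn
  have htne : ∀ p ∈ U, (fun p : Euc d × ℝ => p.2) p ≠ 0 := fun p hp => (hUsub hp).1.ne'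
  by_cases h : (i : ℕ) < d
  · have hD : Dfrak d c i g =
        fun p => pdE d ⟨i, h⟩ g p + c * (p.1 ⟨i, h⟩ / p.2) * pdT d g p := by
      funext p; simp [Dfrak, dif_pos h]
    rw [hD]
    have hpdE : ContDiffOn ℝ r (pdE d ⟨i, h⟩ g) U := hfd.clm_apply contDiffOn_const
    have hx : ContDiffOn ℝ r (fun p : Euc d × ℝ => p.1 ⟨i, h⟩) U := by
      have h0 := ((EuclideanSpace.proj (⟨i, h⟩ : Fin d)).contDiff (n := r)).comp
        (contDiff_fst (𝕜 := ℝ) (E := Euc d) (F := ℝ))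
      exact h0.contDiffOn
    exact hpdE.add (((contDiffOn_const.mul (hx.div ht htne))).mul hpdT)
  · have hD : Dfrak d c i g =
        fun p => (Real.sqrt (p.2 ^ 2 - c * ‖p.1‖ ^ 2) / p.2) * pdT d g p := by
      funext p; simp [Dfrak, dif_neg h]
    rw [hD]
    have hw : ContDiffOn ℝ r (fun p : Euc d × ℝ => p.2 ^ 2 - c * ‖p.1‖ ^ 2) U :=
      ((contDiff_snd.pow 2).sub
        (contDiff_const.mul ((contDiff_norm_sq ℝ).comp contDiff_fst))).contDiffOn
    have hs : ContDiffOn ℝ r (fun p : Euc d × ℝ => Real.sqrt (p.2 ^ 2 - c * ‖p.1‖ ^ 2)) U :=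
      hw.sqrt (fun p hp => (hUsub hp).2.ne')
    exact ((hs.div ht htne)).mul hpdT

/-- `r`-fold application of `𝔇_i` is the pullback under `ψ` of the
`r`-th partial derivative `∂_{y_i}^r` applied to `g∘ψ⁻¹`: `𝔇_i^r g = (∂_{y_i}^r (g∘ψ⁻¹))∘ψ`. -/
theorem Dfrak_iterate_eq_pullback_deriv
    (d : ℕ) (hd : 1 ≤ d) (c : ℝ) (hc : 0 ≤ c) (r : ℕ) (hr : 1 ≤ r)
    (U : Set (Euc d × ℝ)) (hUopen : IsOpen U)
    (hUsub : U ⊆ {p : Euc d × ℝ | 0 < p.2 ∧ 0 < p.2 ^ 2 - c * ‖p.1‖ ^ 2})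
    (g : Euc d × ℝ → ℝ) (hg : ContDiffOn ℝ r g U) :
    ∀ i : Fin (d + 1), ∀ p ∈ U,
      (Dfrak d c i)^[r] g p = (Pder d i)^[r] (g ∘ psi0Inv d c) (psi0 d c p) := by

  suffices H : ∀ (n : ℕ) (g : Euc d × ℝ → ℝ), ContDiffOn ℝ n g U →
      ∀ i : Fin (d + 1), ∀ p ∈ U,
        (Dfrak d c i)^[n] g p = (Pder d i)^[n] (g ∘ psi0Inv d c) (psi0 d c p) from
    fun i p hp => H r g hg i p hp
  intro n
  induction n with
  | zero =>
    intro g hg i p hp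
    simp only [Function.iterate_zero, id_eq, Function.comp_apply]
    rw [psi0Inv_psi0 (hUsub hp).1 (hUsub hp).2.le]
  | succ n ih =>
    intro g hg i p hp
    rw [Function.iterate_succ_apply, Function.iterate_succ_apply]
    have hDg : ContDiffOn ℝ n (Dfrak d c i g) U := Dfrak_contDiffOn d c i n hUopen hUsub hg
    rw [ih (Dfrak d c i g) hDg i p hp]
    have hVopen : IsOpen ({q : Euc d × ℝ | 0 < q.2} ∩ psi0Inv d c ⁻¹' U) := by
      refine IsOpen.inter (isOpen_lt continuous_const continuous_snd) (hUopen.preimage ?_)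
      unfold psi0Inv
      fun_prop
    have hcongr : ∀ q ∈ ({q : Euc d × ℝ | 0 < q.2} ∩ psi0Inv d c ⁻¹' U),
        ((Dfrak d c i g) ∘ psi0Inv d c) q = Pder d i (g ∘ psi0Inv d c) q := by
      intro q hq
      obtain ⟨hq1, hq2⟩ := hq
      have hpU : psi0Inv d c q ∈ U := hq2
      have hp0 := hUsub hpU
      have hgd : DifferentiableAt ℝ g (psi0Inv d c q) :=
        (hg.contDiffAt (hUopen.mem_nhds hpU)).differentiableAt
          (by simp)
      have hk := key_step d c hc i g (psi0Inv d c q) hp0.1 hp0.2 hgd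
      rw [psi0_psi0Inv hc hq1] at hk
      simpa using hk.symm
    have hmem : psi0 d c p ∈ ({q : Euc d × ℝ | 0 < q.2} ∩ psi0Inv d c ⁻¹' U) := by
      constructor
      · exact Real.sqrt_pos.mpr (hUsub hp).2
      · show psi0Inv d c (psi0 d c p) ∈ U
        rw [psi0Inv_psi0 (hUsub hp).1 (hUsub hp).2.le]; exact hp
    exact Pder_iterate_congr d i n hVopen _ _ hcongr _ hmem
end
end

section
/- Let d ≥ 1 and c ≥ 0. Let g be continuously differentiable on an open set U ⊆ {(x,t) ∈ ℝ^d×ℝ : t > 0, t² − c‖x‖² > 0}, and set G = g∘ψ⁻¹ on ψ(U). Then on U: (i) for all 1 ≤ i < j ≤ d, (y_i ∂_{y_j} G − y_j ∂_{y_i} G)∘ψ = x_i ∂_{x_j} g − x_j ∂_{x_i} g; and (ii) for all 1 ≤ i ≤ d, (y_i ∂_{y_{d+1}} G − y_{d+1} ∂_{y_i} G)∘ψ = −(sqrt(t²−c‖x‖²)/t)·( t ∂_{x_i} g − (1−c)·x_i·∂_t g ). -/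
open MeasureTheory

noncomputable section

open Real RealInnerProductSpace

lemma keyD (d : ℕ) (c : ℝ) (p : Euc d × ℝ) (ht : 0 < p.2)
    (hs : 0 < p.2 ^ 2 - c * ‖p.1‖ ^ 2) (g : Euc d × ℝ → ℝ)
    (hgp : DifferentiableAt ℝ g p) (v : Euc d × ℝ) :
    fderiv ℝ (g ∘ psi0Inv d c) (psi0 d c p) v
      = fderiv ℝ g p (v.1,
          (Real.sqrt (p.2 ^ 2 - c * ‖p.1‖ ^ 2) * v.2 + c * ⟪p.1, v.1⟫) / p.2) := by
  set s := Real.sqrt (p.2 ^ 2 - c * ‖p.1‖ ^ 2) with hsdef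
  set q : Euc d × ℝ := (p.1, s) with hq
  have hs2 : s ^ 2 = p.2 ^ 2 - c * ‖p.1‖ ^ 2 := Real.sq_sqrt hs.le
  have hF : q.2 ^ 2 + c * ‖q.1‖ ^ 2 = p.2 ^ 2 := by
    simp only [hq]; rw [hs2]; ring
  have hFne : q.2 ^ 2 + c * ‖q.1‖ ^ 2 ≠ 0 := by rw [hF]; positivity
  -- F(y,w) = w^2 + c⟪y,y⟫
  have hFd : HasFDerivAt (𝕜 := ℝ) (fun r : Euc d × ℝ => r.2 * r.2 + c * ⟪r.1, r.1⟫) _ q :=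
    ((hasFDerivAt_snd (𝕜 := ℝ) (p := q)).mul (hasFDerivAt_snd (𝕜 := ℝ) (p := q))).add
      (((hasFDerivAt_fst (𝕜 := ℝ) (p := q)).inner ℝ (hasFDerivAt_fst (𝕜 := ℝ) (p := q))).const_mul c)
  have hne : q.2 * q.2 + c * ⟪q.1, q.1⟫ ≠ 0 := by
    rwa [real_inner_self_eq_norm_sq, ← pow_two]
  have hsqrt := (Real.hasDerivAt_sqrt hne).comp_hasFDerivAt q hFd
  have hpsiInv0 := HasFDerivAt.prodMk (hasFDerivAt_fst (𝕜 := ℝ) (p := q)) hsqrt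
  have heq : (fun r : Euc d × ℝ => (r.1, Real.sqrt (r.2 * r.2 + c * ⟪r.1, r.1⟫)))
      = psi0Inv d c := by
    funext r
    simp only [psi0Inv, Prod.mk.injEq]
    refine ⟨trivial, ?_⟩
    rw [real_inner_self_eq_norm_sq]
    ring_nf
  simp only [Function.comp_def] at hpsiInv0
  rw [heq] at hpsiInv0
  have hval : psi0Inv d c q = p := by
    simp only [psi0Inv, hq]
    rw [Prod.ext_iff]
    refine ⟨rfl, ?_⟩
    show Real.sqrt (s ^ 2 + c * ‖p.1‖ ^ 2) = p.2
    rw [hs2]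
    have : p.2 ^ 2 - c * ‖p.1‖ ^ 2 + c * ‖p.1‖ ^ 2 = p.2 ^ 2 := by ring
    rw [this, Real.sqrt_sq ht.le]
  have hgq : HasFDerivAt g (fderiv ℝ g p) (psi0Inv d c q) := by
    rw [hval]; exact hgp.hasFDerivAt
  have hcomp := hgq.comp q hpsiInv0
  have hpsi0q : psi0 d c p = q := rfl
  rw [hpsi0q, hcomp.fderiv, ContinuousLinearMap.comp_apply]
  congr 1
  have hsqq : Real.sqrt (q.2 * q.2 + c * ⟪q.1, q.1⟫) = p.2 := by
    rw [real_inner_self_eq_norm_sq, ← pow_two, hF, Real.sqrt_sq ht.le]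
  refine Prod.ext rfl ?_
  show (1 / (2 * Real.sqrt (s * s + c * ⟪p.1, p.1⟫)))
      * (s * v.2 + s * v.2 + c * (⟪p.1, v.1⟫ + ⟪v.1, p.1⟫))
    = (s * v.2 + c * ⟪p.1, v.1⟫) / p.2
  have hsqq' : Real.sqrt (s * s + c * ⟪p.1, p.1⟫) = p.2 := hsqq
  rw [hsqq', real_inner_comm v.1 p.1]
  have htne : p.2 ≠ 0 := ht.ne'
  field_simp
  ring


lemma splitD (d : ℕ) (g : Euc d × ℝ → ℝ) (p : Euc d × ℝ) (u : Euc d) (k : ℝ) :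
    fderiv ℝ g p (u, k) = fderiv ℝ g p (u, 0) + k * fderiv ℝ g p (0, 1) := by
  have h : (u, k) = (u, (0 : ℝ)) + k • ((0 : Euc d), (1 : ℝ)) := by
    simp [Prod.ext_iff]
  rw [h, map_add, _root_.map_smul, smul_eq_mul]

lemma pdEdef (d : ℕ) (i : Fin d) (f : Euc d × ℝ → ℝ) (p : Euc d × ℝ) :
    pdE d i f p = fderiv ℝ f p (EuclideanSpace.single i 1, 0) := rfl

lemma pdTdef (d : ℕ) (f : Euc d × ℝ → ℝ) (p : Euc d × ℝ) :
    pdT d f p = fderiv ℝ f p (0, 1) := rfl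

lemma keyE (d : ℕ) (c : ℝ) (p : Euc d × ℝ) (ht : 0 < p.2)
    (hs : 0 < p.2 ^ 2 - c * ‖p.1‖ ^ 2) (g : Euc d × ℝ → ℝ)
    (hgp : DifferentiableAt ℝ g p) (i : Fin d) :
    pdE d i (g ∘ psi0Inv d c) (psi0 d c p)
      = pdE d i g p + (c * p.1 i / p.2) * pdT d g p := by
  rw [pdEdef, keyD d c p ht hs g hgp]
  have h1 : ((EuclideanSpace.single i (1:ℝ), (0:ℝ)).1,
      (Real.sqrt (p.2 ^ 2 - c * ‖p.1‖ ^ 2) * (EuclideanSpace.single i (1:ℝ), (0:ℝ)).2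
        + c * ⟪p.1, (EuclideanSpace.single i (1:ℝ), (0:ℝ)).1⟫) / p.2)
      = (EuclideanSpace.single i (1:ℝ), c * p.1 i / p.2) := by
    have : ⟪p.1, EuclideanSpace.single i (1:ℝ)⟫ = p.1 i := by
      rw [EuclideanSpace.inner_single_right]; simp
    rw [Prod.ext_iff]
    refine ⟨rfl, ?_⟩
    show (Real.sqrt (p.2 ^ 2 - c * ‖p.1‖ ^ 2) * 0
        + c * ⟪p.1, EuclideanSpace.single i (1:ℝ)⟫) / p.2 = c * p.1 i / p.2
    rw [this]; ring
  rw [h1, splitD, pdEdef, pdTdef]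

lemma keyT (d : ℕ) (c : ℝ) (p : Euc d × ℝ) (ht : 0 < p.2)
    (hs : 0 < p.2 ^ 2 - c * ‖p.1‖ ^ 2) (g : Euc d × ℝ → ℝ)
    (hgp : DifferentiableAt ℝ g p) :
    pdT d (g ∘ psi0Inv d c) (psi0 d c p)
      = (Real.sqrt (p.2 ^ 2 - c * ‖p.1‖ ^ 2) / p.2) * pdT d g p := by
  rw [pdTdef, keyD d c p ht hs g hgp]
  have h1 : (((0:Euc d), (1:ℝ)).1,
      (Real.sqrt (p.2 ^ 2 - c * ‖p.1‖ ^ 2) * ((0:Euc d), (1:ℝ)).2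
        + c * ⟪p.1, ((0:Euc d), (1:ℝ)).1⟫) / p.2)
      = ((0:Euc d), Real.sqrt (p.2 ^ 2 - c * ‖p.1‖ ^ 2) / p.2) := by
    rw [Prod.ext_iff]
    refine ⟨rfl, ?_⟩
    show (Real.sqrt (p.2 ^ 2 - c * ‖p.1‖ ^ 2) * 1 + c * ⟪p.1, (0:Euc d)⟫) / p.2
      = Real.sqrt (p.2 ^ 2 - c * ‖p.1‖ ^ 2) / p.2
    rw [inner_zero_right]; ring
  rw [h1, splitD, pdTdef]
  have hz : fderiv ℝ g p ((0 : Euc d), (0 : ℝ)) = 0 := by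
    have h0 : ((0 : Euc d), (0 : ℝ)) = (0 : Euc d × ℝ) := rfl
    rw [h0, map_zero]
  rw [hz]; ring

/-- behaviour of the angular derivatives under `ψ`, for `G = g∘ψ⁻¹`:
`(y_i ∂_{y_j} G − y_j ∂_{y_i} G)∘ψ = x_i ∂_{x_j} g − x_j ∂_{x_i} g` for `i < j ≤ d`, and
`(y_i ∂_{y_{d+1}} G − y_{d+1} ∂_{y_i} G)∘ψ = −(sqrt(t²−c‖x‖²)/t)(t ∂_{x_i} g − (1−c) x_i ∂_t g)`. -/
theorem angular_derivatives_under_psi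
    (d : ℕ) (hd : 1 ≤ d) (c : ℝ) (hc : 0 ≤ c)
    (U : Set (Euc d × ℝ)) (hUopen : IsOpen U)
    (hUsub : U ⊆ {p : Euc d × ℝ | 0 < p.2 ∧ 0 < p.2 ^ 2 - c * ‖p.1‖ ^ 2})
    (g : Euc d × ℝ → ℝ) (hg : ContDiffOn ℝ 1 g U) :
    (∀ i j : Fin d, i < j → ∀ p ∈ U,
      (psi0 d c p).1 i * pdE d j (g ∘ psi0Inv d c) (psi0 d c p)
          - (psi0 d c p).1 j * pdE d i (g ∘ psi0Inv d c) (psi0 d c p)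
        = p.1 i * pdE d j g p - p.1 j * pdE d i g p) ∧
    (∀ i : Fin d, ∀ p ∈ U,
      (psi0 d c p).1 i * pdT d (g ∘ psi0Inv d c) (psi0 d c p)
          - (psi0 d c p).2 * pdE d i (g ∘ psi0Inv d c) (psi0 d c p)
        = -(Real.sqrt (p.2 ^ 2 - c * ‖p.1‖ ^ 2) / p.2) *
            (p.2 * pdE d i g p - (1 - c) * p.1 i * pdT d g p)) := by
  constructor
  · intro i j hij p hp
    obtain ⟨ht, hs⟩ := hUsub hp
    have hdg : DifferentiableAt ℝ g p :=
      (hg.differentiableOn one_ne_zero).differentiableAt (hUopen.mem_nhds hp)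
    have h1 : (psi0 d c p).1 = p.1 := rfl
    rw [h1, keyE d c p ht hs g hdg i, keyE d c p ht hs g hdg j]
    have htne : p.2 ≠ 0 := ht.ne'
    field_simp
    ring
  · intro i p hp
    obtain ⟨ht, hs⟩ := hUsub hp
    have hdg : DifferentiableAt ℝ g p :=
      (hg.differentiableOn one_ne_zero).differentiableAt (hUopen.mem_nhds hp)
    have h1 : (psi0 d c p).1 = p.1 := rfl
    have h2 : (psi0 d c p).2 = Real.sqrt (p.2 ^ 2 - c * ‖p.1‖ ^ 2) := rfl
    rw [h1, h2, keyE d c p ht hs g hdg i, keyT d c p ht hs g hdg]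
    have htne : p.2 ≠ 0 := ht.ne'
    field_simp
    ring
end
end

section
/- Let d ≥ 1 and n ∈ ℕ. If G(y,v) = H(y,v²) is a polynomial on ℝ^{d+1} of degree at most n that is even in the last variable, then G(ψ(x,t)) = H(x, (−a+(a−c)‖x‖²+t²)/(b−a)) for all (x,t) ∈ Λ^{d+1}_{a,b,c}, and the right-hand side is a polynomial in (x,t), even in t, of degree at most n. Conversely, if g(x,t) = h(x,t²) is a polynomial of degree at most n even in t, then g(ψ⁻¹(y,v)) = h(y, (b−a)v² + a(1−‖y‖²) + c‖y‖²) for all (y,v) ∈ B^{d+1}₊, and the right-hand side is a polynomial in (y,v), even in v, of degree at most n. These two assignments G ↦ G∘ψ and g ↦ g∘ψ⁻¹ are mutually inverse bijections between the set of polynomials of degree at most n even in the last variable viewed as functions on B^{d+1}₊ and the same set viewed as functions on Λ^{d+1}_{a,b,c}. -/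
open MeasureTheory

noncomputable section

/-- The function `𝔱(r,t) = sqrt((−a+(a−c)r²+t²)/(b−a))`. -/
def fraktD (a b c r t : ℝ) : ℝ :=
  Real.sqrt ((-a + (a - c) * r ^ 2 + t ^ 2) / (b - a))

/-- The map `ψ(x,t) = (x, 𝔱(‖x‖,t))`. -/
def psiD (d : ℕ) (a b c : ℝ) (p : Euc d × ℝ) : Euc d × ℝ :=
  (p.1, fraktD a b c ‖p.1‖ p.2)

/-- Functions `ℝ^d × ℝ → ℝ` given by a polynomial of degree at most `n` that is even
in the last variable. -/
def EvenPolyFunD (d n : ℕ) : Set (Euc d × ℝ → ℝ) :=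
  {F | ∃ P : MvPolynomial (Fin (d + 1)) ℝ, P.totalDegree ≤ n ∧ EvenLast d P ∧
    ∀ p : Euc d × ℝ, F p = evP d P p}


namespace H19
open MvPolynomial Finset
variable {d : ℕ}

/-- substitution sending the last variable to its square -/
def τ (d : ℕ) : Fin (d + 1) → MvPolynomial (Fin (d + 1)) ℝ :=
  fun i => if i = Fin.last d then X i ^ 2 else X i

/-- doubling map on exponents of the last variable -/
def em (d : ℕ) (m : Fin (d + 1) →₀ ℕ) : Fin (d + 1) →₀ ℕ :=
  m + Finsupp.single (Fin.last d) (m (Fin.last d))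

lemma em_apply_last (m : Fin (d + 1) →₀ ℕ) :
    em d m (Fin.last d) = 2 * m (Fin.last d) := by
  simp [em, two_mul]

lemma em_apply_castSucc (m : Fin (d + 1) →₀ ℕ) (j : Fin d) :
    em d m j.castSucc = m j.castSucc := by
  simp [em, Finsupp.single_apply, (Fin.castSucc_lt_last j).ne']

lemma em_inj : Function.Injective (em d) := by
  intro m m' h
  ext i
  induction i using Fin.lastCases with
  | last =>
      have := congrArg (fun g => g (Fin.last d)) h
      simp only [em_apply_last] at this
      omega
  | cast j =>
      have := congrArg (fun g => g j.castSucc) h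
      simpa [em_apply_castSucc] using this

lemma em_sum (m : Fin (d + 1) →₀ ℕ) :
    (em d m).sum (fun _ k => k) = m.sum (fun _ k => k) + m (Fin.last d) := by
  rw [em, Finsupp.sum_add_index' (fun _ => rfl) (fun _ _ _ => rfl),
    Finsupp.sum_single_index rfl]

lemma bind₁_τ_monomial (m : Fin (d + 1) →₀ ℕ) (r : ℝ) :
    bind₁ (τ d) (monomial m r) = monomial (em d m) r := by
  classical
  rw [bind₁_monomial, monomial_eq]
  congr 1
  rw [em, Finsupp.prod_add_index' (fun _ => pow_zero _) (fun _ _ _ => pow_add _ _ _),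
    Finsupp.prod_single_index (h := fun i k => (X i : MvPolynomial (Fin (d+1)) ℝ) ^ k) (pow_zero _)]
  have : ∀ i ∈ m.support, (τ d) i ^ m i
      = X i ^ m i * (if i = Fin.last d then X i ^ m i else 1) := by
    intro i _
    by_cases h : i = Fin.last d <;> simp [τ, h, ← pow_mul, two_mul, pow_add]
  rw [Finset.prod_congr rfl this, Finset.prod_mul_distrib]
  have h2 : (∏ x ∈ m.support, if x = Fin.last d then X x ^ m x else (1 : MvPolynomial (Fin (d+1)) ℝ))
      = X (Fin.last d) ^ m (Fin.last d) := by
    rw [show (fun i => if i = Fin.last d then X i ^ m i else (1 : MvPolynomial (Fin (d+1)) ℝ))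
        = fun i => if i = Fin.last d then X (Fin.last d) ^ m (Fin.last d) else 1 by
          funext i; by_cases h : i = Fin.last d <;> simp [h]]
    rw [Finset.prod_ite_eq' m.support (Fin.last d)
      (fun _ => X (Fin.last d) ^ m (Fin.last d))]
    by_cases h : Fin.last d ∈ m.support
    · simp [h]
    · simp only [h, if_false]
      rw [Finsupp.notMem_support_iff.mp h, pow_zero]
  rw [h2]
  rfl

/-- sign flip of the last variable -/
def ν (d : ℕ) : Fin (d + 1) → MvPolynomial (Fin (d + 1)) ℝ :=
  fun i => if i = Fin.last d then -X i else X i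

lemma bind₁_ν_monomial (m : Fin (d + 1) →₀ ℕ) (r : ℝ) :
    bind₁ (ν d) (monomial m r) = monomial m ((-1) ^ m (Fin.last d) * r) := by
  classical
  rw [bind₁_monomial, monomial_eq]
  have : ∀ i ∈ m.support, (ν d) i ^ m i
      = X i ^ m i * (if i = Fin.last d then (-1 : MvPolynomial (Fin (d+1)) ℝ) ^ m i else 1) := by
    intro i _
    by_cases h : i = Fin.last d
    · subst h; simp only [ν, eq_self_iff_true, if_true]; rw [neg_pow]; ring
    · simp [ν, h]
  rw [Finset.prod_congr rfl this, Finset.prod_mul_distrib]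
  have h2 : (∏ x ∈ m.support, if x = Fin.last d then (-1 : MvPolynomial (Fin (d+1)) ℝ) ^ m x else 1)
      = (-1 : MvPolynomial (Fin (d+1)) ℝ) ^ m (Fin.last d) := by
    rw [show (fun i => if i = Fin.last d then (-1 : MvPolynomial (Fin (d+1)) ℝ) ^ m i else 1)
        = fun i => if i = Fin.last d then (-1 : MvPolynomial (Fin (d+1)) ℝ) ^ m (Fin.last d) else 1 by
          funext i; by_cases h : i = Fin.last d <;> simp [h]]
    rw [Finset.prod_ite_eq' m.support (Fin.last d)
      (fun _ => (-1 : MvPolynomial (Fin (d+1)) ℝ) ^ m (Fin.last d))]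
    by_cases h : Fin.last d ∈ m.support
    · simp [h]
    · simp only [h, if_false]
      rw [Finsupp.notMem_support_iff.mp h, pow_zero]
  rw [h2, map_mul, map_pow, map_neg, map_one, Finsupp.prod]
  ring

lemma coeff_bind₁_τ (H : MvPolynomial (Fin (d + 1)) ℝ) (m : Fin (d + 1) →₀ ℕ) :
    coeff (em d m) (bind₁ (τ d) H) = coeff m H := by
  classical
  conv_lhs => rw [H.as_sum, map_sum]
  simp_rw [bind₁_τ_monomial]
  rw [MvPolynomial.coeff_sum]
  simp_rw [coeff_monomial]
  rw [Finset.sum_eq_single m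
    (fun b _ hb => by rw [if_neg (fun h => hb (em_inj h))])
    (fun hm => by rw [if_pos rfl, MvPolynomial.notMem_support_iff.mp hm])]
  rw [if_pos rfl]

lemma coeff_bind₁_ν (P : MvPolynomial (Fin (d + 1)) ℝ) (m : Fin (d + 1) →₀ ℕ) :
    coeff m (bind₁ (ν d) P) = (-1) ^ m (Fin.last d) * coeff m P := by
  classical
  conv_lhs => rw [P.as_sum, map_sum]
  simp_rw [bind₁_ν_monomial]
  rw [MvPolynomial.coeff_sum]
  simp_rw [coeff_monomial]
  rw [Finset.sum_eq_single m
    (fun b _ hb => by rw [if_neg hb])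
    (fun hm => by rw [if_pos rfl, MvPolynomial.notMem_support_iff.mp hm, mul_zero])]
  rw [if_pos rfl]

end H19

namespace H19
open MvPolynomial Finset
variable {d : ℕ}

lemma evP_funext {P Q : MvPolynomial (Fin (d + 1)) ℝ}
    (h : ∀ (x : Euc d) (t : ℝ), evP d P (x, t) = evP d Q (x, t)) : P = Q := by
  apply MvPolynomial.funext
  intro f
  have := h (WithLp.toLp 2 (fun i => f i.castSucc : Fin d → ℝ) : Euc d) (f (Fin.last d))
  have e : (Fin.snoc (fun i => f i.castSucc) (f (Fin.last d)) : Fin (d+1) → ℝ) = f :=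
    Fin.snoc_init_self f
  simpa [evP, e] using this

lemma eval_bind₁ (f : Fin (d + 1) → ℝ) (g : Fin (d + 1) → MvPolynomial (Fin (d + 1)) ℝ)
    (φ : MvPolynomial (Fin (d + 1)) ℝ) :
    eval f (bind₁ g φ) = eval (fun i => eval f (g i)) φ := by
  simpa using eval₂Hom_bind₁ (RingHom.id ℝ) f g φ

lemma evP_bind₁_τ (H : MvPolynomial (Fin (d + 1)) ℝ) (x : Euc d) (t : ℝ) :
    evP d (bind₁ (τ d) H) (x, t) = evP d H (x, t ^ 2) := by
  unfold evP
  rw [eval_bind₁]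
  have hv : (fun i => eval (Fin.snoc (fun i => (x, t).1 i) (x, t).2) (τ d i))
      = (Fin.snoc (fun i => (x, t ^ 2).1 i) (x, t ^ 2).2 : Fin (d+1) → ℝ) := by
    funext i
    induction i using Fin.lastCases with
    | last => simp [τ, Fin.snoc_last]
    | cast j => simp [τ, (Fin.castSucc_lt_last j).ne, Fin.snoc_castSucc]
  rw [hv]

lemma eq_bind₁_τ {G H : MvPolynomial (Fin (d + 1)) ℝ}
    (hGH : ∀ (x : Euc d) (t : ℝ), evP d G (x, t) = evP d H (x, t ^ 2)) :
    G = bind₁ (τ d) H := by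
  apply evP_funext
  intro x t
  rw [hGH, evP_bind₁_τ]

lemma bind₁_ν_eq_self {P : MvPolynomial (Fin (d + 1)) ℝ} (hP : EvenLast d P) :
    bind₁ (ν d) P = P := by
  apply evP_funext
  intro x t
  have h1 : evP d (bind₁ (ν d) P) (x, t) = evP d P (x, -t) := by
    unfold evP
    rw [eval_bind₁]
    have hv : (fun i => eval (Fin.snoc (fun i => (x, t).1 i) (x, t).2) (ν d i))
        = (Fin.snoc (fun i => (x, -t).1 i) (x, -t).2 : Fin (d+1) → ℝ) := by
      funext i
      induction i using Fin.lastCases with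
      | last => simp [ν, Fin.snoc_last]
      | cast j => simp [ν, (Fin.castSucc_lt_last j).ne, Fin.snoc_castSucc]
    rw [hv]
  rw [h1, hP]

lemma even_coeff {P : MvPolynomial (Fin (d + 1)) ℝ} (hP : EvenLast d P)
    {m : Fin (d + 1) →₀ ℕ} (hodd : ¬ Even (m (Fin.last d))) : coeff m P = 0 := by
  have h := coeff_bind₁_ν P m
  rw [bind₁_ν_eq_self hP] at h
  rw [(Nat.not_even_iff_odd.mp hodd).neg_one_pow] at h
  linarith

lemma exists_even_rep {P : MvPolynomial (Fin (d + 1)) ℝ} (hP : EvenLast d P) :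
    ∃ H : MvPolynomial (Fin (d + 1)) ℝ, bind₁ (τ d) H = P := by
  classical
  refine ⟨∑ m ∈ P.support,
    monomial (m - Finsupp.single (Fin.last d) (m (Fin.last d) / 2)) (coeff m P), ?_⟩
  rw [map_sum]
  simp_rw [bind₁_τ_monomial]
  have key : ∀ m ∈ P.support,
      em d (m - Finsupp.single (Fin.last d) (m (Fin.last d) / 2)) = m := by
    intro m hm
    have he : Even (m (Fin.last d)) := by
      by_contra hodd
      exact mem_support_iff.mp hm (even_coeff hP hodd)
    ext i
    induction i using Fin.lastCases with
    | last =>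
        rw [em_apply_last, Finsupp.tsub_apply, Finsupp.single_apply, if_pos rfl]
        obtain ⟨k, hk⟩ := he
        omega
    | cast j =>
        rw [em_apply_castSucc, Finsupp.tsub_apply, Finsupp.single_apply,
          if_neg (Fin.castSucc_lt_last j).ne', Nat.sub_zero]
  rw [Finset.sum_congr rfl (fun m hm => by rw [key m hm])]
  exact P.as_sum.symm

lemma totalDegree_bind₁_le (σf : Fin (d + 1) → MvPolynomial (Fin (d + 1)) ℝ)
    (hσ : ∀ j : Fin d, σf j.castSucc = X j.castSucc)
    (hQ : (σf (Fin.last d)).totalDegree ≤ 2) (H : MvPolynomial (Fin (d + 1)) ℝ) :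
    (bind₁ σf H).totalDegree ≤ (bind₁ (τ d) H).totalDegree := by
  classical
  conv_lhs => rw [H.as_sum, map_sum]
  refine le_trans (totalDegree_finset_sum _ _) ?_
  apply Finset.sup_le
  intro m hm
  rw [bind₁_monomial]
  refine le_trans (totalDegree_mul _ _) ?_
  rw [totalDegree_C, zero_add]
  refine le_trans (totalDegree_finset_prod _ _) ?_
  have step : ∀ i ∈ m.support,
      (σf i ^ m i).totalDegree ≤ m i + (if i = Fin.last d then m i else 0) := by
    intro i _
    refine le_trans (totalDegree_pow _ _) ?_
    by_cases h : i = Fin.last d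
    · subst h
      simp only [if_pos rfl]
      calc m (Fin.last d) * (σf (Fin.last d)).totalDegree
          ≤ m (Fin.last d) * 2 := Nat.mul_le_mul_left _ hQ
        _ = m (Fin.last d) + m (Fin.last d) := by ring
    · obtain ⟨j, rfl⟩ := Fin.exists_castSucc_eq.mpr h
      rw [hσ j, totalDegree_X]
      simp
  refine le_trans (Finset.sum_le_sum step) ?_
  have hle : (em d m).sum (fun _ k => k) ≤ (bind₁ (τ d) H).totalDegree :=
    le_totalDegree (mem_support_iff.mpr
      (by rw [coeff_bind₁_τ]; exact mem_support_iff.mp hm))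
  refine le_trans ?_ hle
  rw [em_sum, Finset.sum_add_distrib]
  have h2 : (∑ i ∈ m.support, if i = Fin.last d then m i else 0) ≤ m (Fin.last d) := by
    rw [Finset.sum_ite_eq' m.support (Fin.last d) (fun i => m i)]
    split <;> omega
  exact Nat.add_le_add le_rfl h2

end H19

namespace H19
open MvPolynomial Finset
variable {d : ℕ}

lemma norm_sq (x : Euc d) : ‖x‖ ^ 2 = ∑ i, x i ^ 2 := by
  rw [EuclideanSpace.norm_eq, Real.sq_sqrt (by positivity)]
  simp [Real.norm_eq_abs, sq_abs]

/-- sum of squares of the first `d` variables -/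
def S2 (d : ℕ) : MvPolynomial (Fin (d + 1)) ℝ := ∑ j : Fin d, X (Fin.castSucc j) ^ 2

def Q1 (d : ℕ) (a b c : ℝ) : MvPolynomial (Fin (d + 1)) ℝ :=
  C ((b - a)⁻¹) * (C (a - c) * S2 d + X (Fin.last d) ^ 2 + C (-a))

def Q2 (d : ℕ) (a b c : ℝ) : MvPolynomial (Fin (d + 1)) ℝ :=
  C (b - a) * X (Fin.last d) ^ 2 + C a * (C 1 + C (-1) * S2 d) + C c * S2 d

lemma evP_S2 (x : Euc d) (t : ℝ) : evP d (S2 d) (x, t) = ‖x‖ ^ 2 := by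
  rw [norm_sq]
  simp [evP, S2, Fin.snoc_castSucc]

lemma evP_Q1 (a b c : ℝ) (x : Euc d) (t : ℝ) :
    evP d (Q1 d a b c) (x, t) = (-a + (a - c) * ‖x‖ ^ 2 + t ^ 2) / (b - a) := by
  have h := evP_S2 x t
  simp only [evP, Q1, map_mul, map_add, eval_C, eval_pow, eval_X] at h ⊢
  rw [show ((Fin.snoc (fun i => (x, t).1 i) (x, t).2 : Fin (d+1) → ℝ) (Fin.last d)) = t from
    Fin.snoc_last _ _, h, div_eq_inv_mul]
  ring

lemma evP_Q2 (a b c : ℝ) (x : Euc d) (t : ℝ) :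
    evP d (Q2 d a b c) (x, t) = (b - a) * t ^ 2 + a * (1 - ‖x‖ ^ 2) + c * ‖x‖ ^ 2 := by
  have h := evP_S2 x t
  simp only [evP, Q2, map_mul, map_add, eval_C, eval_pow, eval_X] at h ⊢
  rw [show ((Fin.snoc (fun i => (x, t).1 i) (x, t).2 : Fin (d+1) → ℝ) (Fin.last d)) = t from
    Fin.snoc_last _ _, h]
  ring

lemma totalDegree_S2_le : (S2 d).totalDegree ≤ 2 := by
  refine le_trans (totalDegree_finset_sum _ _) ?_
  apply Finset.sup_le
  intro j _
  rw [totalDegree_X_pow]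

lemma totalDegree_Q1_le (a b c : ℝ) : (Q1 d a b c).totalDegree ≤ 2 := by
  refine le_trans (totalDegree_mul _ _) ?_
  rw [totalDegree_C, zero_add]
  refine le_trans (totalDegree_add _ _) ?_
  refine max_le (le_trans (totalDegree_add _ _) (max_le ?_ ?_)) ?_
  · refine le_trans (totalDegree_mul _ _) ?_
    rw [totalDegree_C, zero_add]
    exact totalDegree_S2_le
  · rw [totalDegree_X_pow]
  · rw [totalDegree_C]; omega

lemma totalDegree_Q2_le (a b c : ℝ) : (Q2 d a b c).totalDegree ≤ 2 := by
  refine le_trans (totalDegree_add _ _) (max_le (le_trans (totalDegree_add _ _) (max_le ?_ ?_)) ?_)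
  · refine le_trans (totalDegree_mul _ _) ?_
    rw [totalDegree_C, zero_add, totalDegree_X_pow]
  · refine le_trans (totalDegree_mul _ _) ?_
    rw [totalDegree_C, zero_add]
    refine le_trans (totalDegree_add _ _) (max_le ?_ ?_)
    · rw [totalDegree_C]; omega
    · refine le_trans (totalDegree_mul _ _) ?_
      rw [totalDegree_C, zero_add]
      exact totalDegree_S2_le
  · refine le_trans (totalDegree_mul _ _) ?_
    rw [totalDegree_C, zero_add]
    exact totalDegree_S2_le

/-- substitution of `Q` for the last variable -/
def σQ (d : ℕ) (Q : MvPolynomial (Fin (d + 1)) ℝ) : Fin (d + 1) → MvPolynomial (Fin (d + 1)) ℝ :=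
  fun i => if i = Fin.last d then Q else X i

lemma evP_bind₁_σQ (Q H : MvPolynomial (Fin (d + 1)) ℝ) (p : Euc d × ℝ) :
    evP d (bind₁ (σQ d Q) H) p = evP d H (p.1, evP d Q p) := by
  unfold evP
  rw [eval_bind₁]
  have hv : (fun i => eval (Fin.snoc (fun i => p.1 i) p.2) (σQ d Q i))
      = (Fin.snoc (fun i => (p.1, evP d Q p).1 i) (p.1, evP d Q p).2 : Fin (d+1) → ℝ) := by
    funext i
    induction i using Fin.lastCases with
    | last => simp [σQ, Fin.snoc_last]; rfl
    | cast j => simp [σQ, (Fin.castSucc_lt_last j).ne, Fin.snoc_castSucc]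
  rw [hv]
  rfl

/-- The workhorse: substituting a quadratic `Q`, even in the last variable, for the
square of the last variable. -/
lemma main_sub {n : ℕ} (Q : MvPolynomial (Fin (d + 1)) ℝ) (hQdeg : Q.totalDegree ≤ 2)
    (hQeven : ∀ (x : Euc d) (t : ℝ), evP d Q (x, -t) = evP d Q (x, t))
    (H G : MvPolynomial (Fin (d + 1)) ℝ) (hn : G.totalDegree ≤ n)
    (hGH : ∀ (x : Euc d) (t : ℝ), evP d G (x, t) = evP d H (x, t ^ 2)) :
    ∃ Gt : MvPolynomial (Fin (d + 1)) ℝ, Gt.totalDegree ≤ n ∧ EvenLast d Gt ∧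
      ∀ p : Euc d × ℝ, evP d Gt p = evP d H (p.1, evP d Q p) := by
  have hG : G = bind₁ (τ d) H := eq_bind₁_τ hGH
  refine ⟨bind₁ (σQ d Q) H, ?_, ?_, fun p => evP_bind₁_σQ Q H p⟩
  · refine le_trans (totalDegree_bind₁_le (σQ d Q)
      (fun j => if_neg (Fin.castSucc_lt_last j).ne) (by rw [σQ, if_pos rfl]; exact hQdeg) H) ?_
    rw [← hG]
    exact hn
  · intro x t
    rw [evP_bind₁_σQ, evP_bind₁_σQ]
    have : evP d Q (x, -t) = evP d Q (x, t) := hQeven x t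
    simp only [this]

end H19
namespace H19
open MvPolynomial Finset
variable {d : ℕ}

/-- Polynomial evaluation is analytic. -/
lemma evP_analytic (P : MvPolynomial (Fin (d + 1)) ℝ) :
    AnalyticOnNhd ℝ (fun p => evP d P p) Set.univ := by
  let f : (Euc d × ℝ) →ₗ[ℝ] (Fin (d + 1) → ℝ) :=
    LinearMap.pi (fun i => Fin.lastCases (LinearMap.snd ℝ (Euc d) ℝ)
      (fun j => (EuclideanSpace.projₗ j).comp (LinearMap.fst ℝ (Euc d) ℝ)) i)
  have hfp : ∀ p : Euc d × ℝ,
      (LinearMap.toContinuousLinearMap f) p = Fin.snoc (fun i => p.1 i) p.2 := by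
    intro p
    funext i
    rw [LinearMap.coe_toContinuousLinearMap']
    induction i using Fin.lastCases with
    | last => simp [f, Fin.snoc_last]
    | cast j => simp [f, Fin.snoc_castSucc]
  have h2 := AnalyticOnNhd.eval_continuousLinearMap (LinearMap.toContinuousLinearMap f) P
  have h3 : (fun x => eval ((LinearMap.toContinuousLinearMap f) x) P)
      = fun p : Euc d × ℝ => evP d P p := by
    funext p
    rw [hfp p]
    rfl
  rwa [h3] at h2

/-- Two polynomials whose evaluations agree on a nonempty open set agree everywhere. -/
lemma evP_eq_of_eqOn_open {P P' : MvPolynomial (Fin (d + 1)) ℝ} {U : Set (Euc d × ℝ)}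
    (hU : IsOpen U) (hne : U.Nonempty) (h : ∀ p ∈ U, evP d P p = evP d P' p)
    (p : Euc d × ℝ) : evP d P p = evP d P' p := by
  obtain ⟨z₀, hz₀⟩ := hne
  exact AnalyticOnNhd.eqOn_of_preconnected_of_eventuallyEq
    (𝕜 := ℝ) (evP_analytic P) (evP_analytic P') (convex_univ.isPreconnected)
    (Set.mem_univ z₀) (Filter.eventuallyEq_of_mem (hU.mem_nhds hz₀) h) (Set.mem_univ p)

/-- An open subset of `Λ`. -/
def ULam (d : ℕ) (a b c : ℝ) : Set (Euc d × ℝ) :=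
  {p | 0 < p.2 ∧ ‖p.1‖ < 1 ∧ a + (c - a) * ‖p.1‖ ^ 2 < p.2 ^ 2 ∧
       p.2 ^ 2 < b + (c - b) * ‖p.1‖ ^ 2}

lemma isOpen_ULam (a b c : ℝ) : IsOpen (ULam d a b c) := by
  have c1 : Continuous fun p : Euc d × ℝ => p.2 := continuous_snd
  have c2 : Continuous fun p : Euc d × ℝ => ‖p.1‖ := continuous_fst.norm
  have c3 : Continuous fun p : Euc d × ℝ => p.2 ^ 2 := c1.pow 2
  have c4 : Continuous fun p : Euc d × ℝ => a + (c - a) * ‖p.1‖ ^ 2 :=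
    continuous_const.add (continuous_const.mul (c2.pow 2))
  have c5 : Continuous fun p : Euc d × ℝ => b + (c - b) * ‖p.1‖ ^ 2 :=
    continuous_const.add (continuous_const.mul (c2.pow 2))
  exact (isOpen_lt continuous_const c1).inter ((isOpen_lt c2 continuous_const).inter
    ((isOpen_lt c4 c3).inter (isOpen_lt c3 c5)))

lemma ULam_nonempty {a b c : ℝ} (ha : 0 ≤ a) (hab : a < b) :
    (ULam d a b c).Nonempty := by
  refine ⟨((0 : Euc d), Real.sqrt ((a + b) / 2)), ?_, ?_, ?_, ?_⟩
  · exact Real.sqrt_pos.mpr (by linarith)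
  · simp
  · rw [Real.sq_sqrt (by linarith)]
    simp only [norm_zero]
    nlinarith
  · rw [Real.sq_sqrt (by linarith)]
    simp only [norm_zero]
    nlinarith

lemma ULam_subset (a b c : ℝ) : ULam d a b c ⊆ LamD d a b c :=
  fun p hp => ⟨hp.1.le, hp.2.1.le, hp.2.2.1.le, hp.2.2.2.le⟩

/-- An open subset of `B₊`. -/
def UBall (d : ℕ) : Set (Euc d × ℝ) := {p | ‖p.1‖ ^ 2 + p.2 ^ 2 < 1 ∧ 0 < p.2}

lemma isOpen_UBall : IsOpen (UBall d) := by
  have c2 : Continuous fun p : Euc d × ℝ => ‖p.1‖ ^ 2 + p.2 ^ 2 :=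
    ((continuous_fst.norm.pow 2).add (continuous_snd.pow 2))
  exact (isOpen_lt c2 continuous_const).inter (isOpen_lt continuous_const continuous_snd)

lemma UBall_nonempty : (UBall d).Nonempty := by
  refine ⟨((0 : Euc d), 1 / 2), ?_, by norm_num⟩
  simp only [UBall, norm_zero, Set.mem_setOf_eq]
  norm_num

lemma UBall_subset : UBall d ⊆ ballPlus d := fun p hp => ⟨hp.1.le, hp.2.le⟩

section Geometry
variable {a b c : ℝ}

lemma frakt_sq (hab : a < b) {p : Euc d × ℝ} (hp : p ∈ LamD d a b c) :
    (fraktD a b c ‖p.1‖ p.2) ^ 2 = (-a + (a - c) * ‖p.1‖ ^ 2 + p.2 ^ 2) / (b - a) := by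
  obtain ⟨h0, h1, h2, h3⟩ := hp
  exact Real.sq_sqrt (div_nonneg (by nlinarith) (by linarith))

lemma w_nonneg (ha : 0 ≤ a) (hab : a < b) (hc : 0 ≤ c) {p : Euc d × ℝ}
    (hp : p ∈ ballPlus d) :
    0 ≤ (b - a) * p.2 ^ 2 + a * (1 - ‖p.1‖ ^ 2) + c * ‖p.1‖ ^ 2 := by
  obtain ⟨h1, h2⟩ := hp
  nlinarith [sq_nonneg p.2, sq_nonneg ‖p.1‖]

lemma w_sq (ha : 0 ≤ a) (hab : a < b) (hc : 0 ≤ c) {p : Euc d × ℝ} (hp : p ∈ ballPlus d) :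
    (Real.sqrt ((b - a) * p.2 ^ 2 + a * (1 - ‖p.1‖ ^ 2) + c * ‖p.1‖ ^ 2)) ^ 2
      = (b - a) * p.2 ^ 2 + a * (1 - ‖p.1‖ ^ 2) + c * ‖p.1‖ ^ 2 :=
  Real.sq_sqrt (w_nonneg ha hab hc hp)

lemma psiDInv_mem (ha : 0 ≤ a) (hab : a < b) (hc : 0 ≤ c) {p : Euc d × ℝ}
    (hp : p ∈ ballPlus d) : psiDInv d a b c p ∈ LamD d a b c := by
  have hw := w_nonneg ha hab hc hp
  obtain ⟨h1, h2⟩ := hp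
  have hy2 : ‖p.1‖ ^ 2 ≤ 1 := by nlinarith
  refine ⟨Real.sqrt_nonneg _, ?_, ?_, ?_⟩
  · show ‖p.1‖ ≤ 1
    nlinarith [norm_nonneg p.1]
  · show a + (c - a) * ‖p.1‖ ^ 2 ≤ (Real.sqrt _) ^ 2
    rw [Real.sq_sqrt hw]
    nlinarith
  · show (Real.sqrt _) ^ 2 ≤ b + (c - b) * ‖p.1‖ ^ 2
    rw [Real.sq_sqrt hw]
    nlinarith

lemma psiD_psiDInv (ha : 0 ≤ a) (hab : a < b) (hc : 0 ≤ c) {p : Euc d × ℝ}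
    (hp : p ∈ ballPlus d) : psiD d a b c (psiDInv d a b c p) = p := by
  have hw := w_nonneg ha hab hc hp
  obtain ⟨h1, h2⟩ := hp
  refine Prod.ext rfl ?_
  show fraktD a b c ‖p.1‖
    (Real.sqrt ((b - a) * p.2 ^ 2 + a * (1 - ‖p.1‖ ^ 2) + c * ‖p.1‖ ^ 2)) = p.2
  unfold fraktD
  rw [Real.sq_sqrt hw]
  have hkey : (-a + (a - c) * ‖p.1‖ ^ 2
      + ((b - a) * p.2 ^ 2 + a * (1 - ‖p.1‖ ^ 2) + c * ‖p.1‖ ^ 2)) / (b - a) = p.2 ^ 2 := by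
    rw [div_eq_iff (by linarith : b - a ≠ 0)]
    ring
  rw [hkey, Real.sqrt_sq h2]

end Geometry
end H19
namespace H19
open MvPolynomial
variable {d : ℕ}

lemma evP_Q1' (a b c : ℝ) (p : Euc d × ℝ) :
    evP d (Q1 d a b c) p = (-a + (a - c) * ‖p.1‖ ^ 2 + p.2 ^ 2) / (b - a) :=
  evP_Q1 a b c p.1 p.2

lemma evP_Q2' (a b c : ℝ) (p : Euc d × ℝ) :
    evP d (Q2 d a b c) p = (b - a) * p.2 ^ 2 + a * (1 - ‖p.1‖ ^ 2) + c * ‖p.1‖ ^ 2 :=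
  evP_Q2 a b c p.1 p.2

end H19

/-- composition with `ψ` resp. `ψ⁻¹` gives mutually inverse bijections
between polynomials of degree at most `n` even in the last variable, viewed as
functions on `B^{d+1}₊` resp. on `Λ^{d+1}_{a,b,c}`, with the stated explicit formulas. -/
theorem even_polynomials_correspondence_D
    (d : ℕ) (hd : 1 ≤ d) (a b c : ℝ) (ha : 0 ≤ a) (hab : a < b) (hc : 0 ≤ c) (n : ℕ) :
    -- explicit formula for `G∘ψ`
    (∀ G H : MvPolynomial (Fin (d + 1)) ℝ, G.totalDegree ≤ n →
      (∀ (x : Euc d) (t : ℝ), evP d G (x, t) = evP d H (x, t ^ 2)) →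
      (∀ p ∈ LamD d a b c,
        evP d G (psiD d a b c p)
          = evP d H (p.1, (-a + (a - c) * ‖p.1‖ ^ 2 + p.2 ^ 2) / (b - a))) ∧
      ∃ Gt : MvPolynomial (Fin (d + 1)) ℝ, Gt.totalDegree ≤ n ∧ EvenLast d Gt ∧
        ∀ p : Euc d × ℝ,
          evP d Gt p
            = evP d H (p.1, (-a + (a - c) * ‖p.1‖ ^ 2 + p.2 ^ 2) / (b - a))) ∧
    -- explicit formula for `g∘ψ⁻¹`
    (∀ g h : MvPolynomial (Fin (d + 1)) ℝ, g.totalDegree ≤ n →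
      (∀ (x : Euc d) (t : ℝ), evP d g (x, t) = evP d h (x, t ^ 2)) →
      (∀ p ∈ ballPlus d,
        evP d g (psiDInv d a b c p)
          = evP d h (p.1, (b - a) * p.2 ^ 2 + a * (1 - ‖p.1‖ ^ 2) + c * ‖p.1‖ ^ 2)) ∧
      ∃ gt : MvPolynomial (Fin (d + 1)) ℝ, gt.totalDegree ≤ n ∧ EvenLast d gt ∧
        ∀ p : Euc d × ℝ,
          evP d gt p
            = evP d h (p.1, (b - a) * p.2 ^ 2 + a * (1 - ‖p.1‖ ^ 2) + c * ‖p.1‖ ^ 2)) ∧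
    -- `G ↦ G∘ψ` is a bijection onto the even polynomial functions on `Λ^{d+1}_{a,b,c}`
    (∀ G ∈ EvenPolyFunD d n, ∃! F, F ∈ EvenPolyFunD d n ∧
      ∀ p ∈ LamD d a b c, F p = G (psiD d a b c p)) ∧
    -- `g ↦ g∘ψ⁻¹` is a bijection onto the even polynomial functions on `B^{d+1}₊`
    (∀ F ∈ EvenPolyFunD d n, ∃! G, G ∈ EvenPolyFunD d n ∧
      ∀ p ∈ ballPlus d, G p = F (psiDInv d a b c p)) ∧
    -- the two assignments are mutually inverse
    (∀ G ∈ EvenPolyFunD d n, ∀ F ∈ EvenPolyFunD d n,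
      (∀ p ∈ LamD d a b c, F p = G (psiD d a b c p)) →
      ∀ p ∈ ballPlus d, G p = F (psiDInv d a b c p)) := by
    classical
  refine ⟨?_, ?_, ?_, ?_, ?_⟩
  -- PART 1
  · intro G H hGdeg hGH
    constructor
    · intro p hp
      have h1 : evP d G (psiD d a b c p) = evP d H (p.1, (fraktD a b c ‖p.1‖ p.2) ^ 2) :=
        hGH p.1 (fraktD a b c ‖p.1‖ p.2)
      rw [h1, H19.frakt_sq hab hp]
    · obtain ⟨Gt, h1, h2, h3⟩ := H19.main_sub (H19.Q1 d a b c) (H19.totalDegree_Q1_le a b c)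
        (fun x t => by rw [H19.evP_Q1, H19.evP_Q1]; ring) H G hGdeg hGH
      exact ⟨Gt, h1, h2, fun p => by rw [h3 p, H19.evP_Q1' a b c p]⟩
  -- PART 2
  · intro g h hgdeg hgh
    constructor
    · intro p hp
      have h1 : evP d g (psiDInv d a b c p)
          = evP d h (p.1,
            (Real.sqrt ((b - a) * p.2 ^ 2 + a * (1 - ‖p.1‖ ^ 2) + c * ‖p.1‖ ^ 2)) ^ 2) :=
        hgh p.1 (Real.sqrt ((b - a) * p.2 ^ 2 + a * (1 - ‖p.1‖ ^ 2) + c * ‖p.1‖ ^ 2))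
      rw [h1, H19.w_sq ha hab hc hp]
    · obtain ⟨gt, h1, h2, h3⟩ := H19.main_sub (H19.Q2 d a b c) (H19.totalDegree_Q2_le a b c)
        (fun x t => by rw [H19.evP_Q2, H19.evP_Q2]; ring) h g hgdeg hgh
      exact ⟨gt, h1, h2, fun p => by rw [h3 p, H19.evP_Q2' a b c p]⟩
  -- PART 3
  · rintro G ⟨P, hPdeg, hPev, hPfun⟩
    obtain ⟨H, hH⟩ := H19.exists_even_rep hPev
    have hGH : ∀ (x : Euc d) (t : ℝ), evP d P (x, t) = evP d H (x, t ^ 2) := by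
      intro x t; rw [← hH, H19.evP_bind₁_τ]
    obtain ⟨Gt, h1, h2, h3⟩ := H19.main_sub (H19.Q1 d a b c) (H19.totalDegree_Q1_le a b c)
      (fun x t => by rw [H19.evP_Q1, H19.evP_Q1]; ring) H P hPdeg hGH
    have hform : ∀ p ∈ LamD d a b c, evP d Gt p = G (psiD d a b c p) := by
      intro p hp
      rw [h3 p, H19.evP_Q1' a b c p, hPfun (psiD d a b c p)]
      have h4 : evP d P (psiD d a b c p) = evP d H (p.1, (fraktD a b c ‖p.1‖ p.2) ^ 2) :=
        hGH p.1 (fraktD a b c ‖p.1‖ p.2)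
      rw [h4, H19.frakt_sq hab hp]
    refine ⟨fun p => evP d Gt p, ⟨⟨Gt, h1, h2, fun _ => rfl⟩, hform⟩, ?_⟩
    rintro F' ⟨⟨P', hP'deg, hP'ev, hP'fun⟩, hagree⟩
    funext p
    rw [hP'fun p]
    exact H19.evP_eq_of_eqOn_open (H19.isOpen_ULam a b c) (H19.ULam_nonempty ha hab)
      (fun q hq => by
        have hqL := H19.ULam_subset a b c hq
        calc evP d P' q = F' q := (hP'fun q).symm
          _ = G (psiD d a b c q) := hagree q hqL
          _ = evP d Gt q := (hform q hqL).symm) p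
  -- PART 4
  · rintro F ⟨P, hPdeg, hPev, hPfun⟩
    obtain ⟨H, hH⟩ := H19.exists_even_rep hPev
    have hGH : ∀ (x : Euc d) (t : ℝ), evP d P (x, t) = evP d H (x, t ^ 2) := by
      intro x t; rw [← hH, H19.evP_bind₁_τ]
    obtain ⟨Gt, h1, h2, h3⟩ := H19.main_sub (H19.Q2 d a b c) (H19.totalDegree_Q2_le a b c)
      (fun x t => by rw [H19.evP_Q2, H19.evP_Q2]; ring) H P hPdeg hGH
    have hform : ∀ p ∈ ballPlus d, evP d Gt p = F (psiDInv d a b c p) := by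
      intro p hp
      rw [h3 p, H19.evP_Q2' a b c p, hPfun (psiDInv d a b c p)]
      have h4 : evP d P (psiDInv d a b c p)
          = evP d H (p.1,
            (Real.sqrt ((b - a) * p.2 ^ 2 + a * (1 - ‖p.1‖ ^ 2) + c * ‖p.1‖ ^ 2)) ^ 2) :=
        hGH p.1 (Real.sqrt ((b - a) * p.2 ^ 2 + a * (1 - ‖p.1‖ ^ 2) + c * ‖p.1‖ ^ 2))
      rw [h4, H19.w_sq ha hab hc hp]
    refine ⟨fun p => evP d Gt p, ⟨⟨Gt, h1, h2, fun _ => rfl⟩, hform⟩, ?_⟩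
    rintro G' ⟨⟨P', hP'deg, hP'ev, hP'fun⟩, hagree⟩
    funext p
    rw [hP'fun p]
    exact H19.evP_eq_of_eqOn_open H19.isOpen_UBall H19.UBall_nonempty
      (fun q hq => by
        have hqB := H19.UBall_subset hq
        calc evP d P' q = G' q := (hP'fun q).symm
          _ = F (psiDInv d a b c q) := hagree q hqB
          _ = evP d Gt q := (hform q hqB).symm) p
  -- PART 5
  · intro G hG F hF hFG p hp
    rw [hFG (psiDInv d a b c p) (H19.psiDInv_mem ha hab hc hp),
      H19.psiD_psiDInv ha hab hc hp]
end
end
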